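/- arXiv:1903.07548 — 3 statements merged into one kernel-verified Lean document; each statement's English description precedes it below -/
import Mathlib

section
/- Let Σ=(Γ,σ) be a connected signed graph with an orientation ω compatible with σ, let G be a finite additive abelian group, and let B be a connected basis of Σ. Then the restriction map sending a G-tension f of Σ to its restriction f|_B : B → G is a bijection between the set of G-tensions of Σ and the set of all functions B → G; in particular, a G-tension of Σ is uniquely determined by its values on the edges of a connected basis. -/
attribute [local instance] Classical.propDecidable

noncomputable section SignedGraphs

/-- A signed graph: a multigraph with ordered pairs of endpoints (the order is
an artefact of the encoding) together with a sign `±1` on each edge. -/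
structure SGraph (V : Type*) (E : Type*) where
  ends : E → V × V
  sign : E → ℤˣ

namespace SGraph

variable {V E : Type*}

/-- Endpoint of `e` on side `b`; a loop has both endpoints equal, but its two
half-edges are distinguished by the side `b`. -/
def endpt (Γ : SGraph V E) (e : E) (b : Bool) : V :=
  cond b (Γ.ends e).1 (Γ.ends e).2

/-- `e` is a loop of the underlying graph. -/
def IsLoop (Γ : SGraph V E) (e : E) : Prop := (Γ.ends e).1 = (Γ.ends e).2

/-- Walks in a signed multigraph: a step traverses an edge `e` in direction `d`
(from the side-`d` endpoint to the other endpoint). -/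
inductive Walk (Γ : SGraph V E) : V → V → Type _
  | nil (v : V) : Walk Γ v v
  | cons (e : E) (d : Bool) {w : V} (p : Walk Γ (Γ.endpt e (!d)) w) : Walk Γ (Γ.endpt e d) w

namespace Walk

variable {Γ : SGraph V E}

/-- The list of vertices visited by a walk (including the final one). -/
def verts : ∀ {u v : V}, Γ.Walk u v → List V
  | _, _, .nil x => [x]
  | _, _, .cons e d p => Γ.endpt e d :: p.verts

/-- The list of edges traversed by a walk. -/
def edges : ∀ {u v : V}, Γ.Walk u v → List E
  | _, _, .nil _ => []
  | _, _, .cons e _ p => e :: p.edges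

/-- The list of (edge, direction) steps of a walk. -/
def steps : ∀ {u v : V}, Γ.Walk u v → List (E × Bool)
  | _, _, .nil _ => []
  | _, _, .cons e d p => (e, d) :: p.steps

/-- The sources of the steps of a walk, i.e. all visited vertices except the last. -/
def srcs {u v : V} (W : Γ.Walk u v) : List V := W.verts.dropLast

/-- The sign of a walk: the product of the signs of its edges. -/
def sgn : ∀ {u v : V}, Γ.Walk u v → ℤˣ
  | _, _, .nil _ => 1
  | _, _, .cons e _ p => Γ.sign e * p.sgn

/-- Concatenation of walks. -/
def append : ∀ {u v w : V}, Γ.Walk u v → Γ.Walk v w → Γ.Walk u w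
  | _, _, _, .nil _, q => q
  | _, _, _, .cons e d p, q => .cons e d (p.append q)

/-- The sum `Σᵢ f(eᵢ)` of the values of `f` on the edges of the walk,
with multiplicity. -/
def edgeSum {G : Type*} [AddCommGroup G] (f : E → G) {u v : V} (W : Γ.Walk u v) : G :=
  (W.edges.map f).sum

/-- The sum `Σᵢ ω(vᵢ,eᵢ)·(Π_{j<i} σ(eⱼ))·f(eᵢ)` along a walk, where `ω(vᵢ,eᵢ)`
is the value of `ω` on the half-edge by which the walk leaves `vᵢ`. -/
def tensionSum {G : Type*} [AddCommGroup G] (ω : E → Bool → ℤˣ) (f : E → G) :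
    ∀ {u v : V}, Γ.Walk u v → G
  | _, _, .nil _ => 0
  | _, _, .cons e d p => ((ω e d : ℤ) • f e) + ((Γ.sign e : ℤ) • tensionSum ω f p)

/-- `Q` is the reverse of the walk `P`. -/
def IsReverseOf {u v : V} (Q : Γ.Walk v u) (P : Γ.Walk u v) : Prop :=
  Q.steps = P.steps.reverse.map fun s => (s.1, !s.2)

end Walk

/-- A closed walk is a cycle if it is nontrivial, visits no vertex twice and
uses no edge twice. -/
def IsCycle (Γ : SGraph V E) {v : V} (W : Γ.Walk v v) : Prop :=
  W.edges ≠ [] ∧ W.srcs.Nodup ∧ W.edges.Nodup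

/-- A balanced (positive) cycle. -/
def IsBalancedCycle (Γ : SGraph V E) {v : V} (W : Γ.Walk v v) : Prop :=
  Γ.IsCycle W ∧ W.sgn = 1

/-- An unbalanced (negative) cycle. -/
def IsUnbalancedCycle (Γ : SGraph V E) {v : V} (W : Γ.Walk v v) : Prop :=
  Γ.IsCycle W ∧ W.sgn = -1

/-- A nontrivial walk that is a simple path (all visited vertices distinct). -/
def IsPathWalk (Γ : SGraph V E) {u v : V} (P : Γ.Walk u v) : Prop :=
  P.edges ≠ [] ∧ P.verts.Nodup

/-- A tight handcuff at `v`: two edge-disjoint unbalanced cycles sharing exactly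
the vertex `v`. -/
def IsTightHandcuff (Γ : SGraph V E) {v : V} (C₁ C₂ : Γ.Walk v v) : Prop :=
  Γ.IsUnbalancedCycle C₁ ∧ Γ.IsUnbalancedCycle C₂ ∧
    (∀ x ∈ C₁.srcs, x ∈ C₂.srcs → x = v) ∧ ∀ e ∈ C₁.edges, e ∉ C₂.edges

/-- A loose handcuff: two vertex-disjoint unbalanced cycles `C₁` (at `u`) and
`C₂` (at `w`) joined by a simple path `P` from `u` to `w` meeting the cycles
exactly in its endpoints. -/
def IsLooseHandcuff (Γ : SGraph V E) {u w : V} (C₁ : Γ.Walk u u) (P : Γ.Walk u w)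
    (C₂ : Γ.Walk w w) : Prop :=
  Γ.IsUnbalancedCycle C₁ ∧ Γ.IsUnbalancedCycle C₂ ∧ Γ.IsPathWalk P ∧
    (∀ x ∈ C₁.srcs, x ∉ C₂.srcs) ∧
    (∀ x ∈ P.verts, x ∈ C₁.srcs → x = u) ∧
    (∀ x ∈ P.verts, x ∈ C₂.srcs → x = w) ∧
    ∀ e ∈ P.edges, e ∉ C₁.edges ∧ e ∉ C₂.edges

/-- The canonical closed walks traversing a circuit of the signed graph:
a balanced cycle, a tight handcuff `C₁ * C₂`, or a loose handcuff
`C₁ * P * C₂ * P⁻¹` (the circuit path edges being used twice). -/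
def IsBasicCircuitWalk (Γ : SGraph V E) {v : V} (W : Γ.Walk v v) : Prop :=
  Γ.IsBalancedCycle W ∨
    (∃ C₁ C₂ : Γ.Walk v v, Γ.IsTightHandcuff C₁ C₂ ∧ W = C₁.append C₂) ∨
    ∃ (w : V) (C₁ : Γ.Walk v v) (P : Γ.Walk v w) (C₂ : Γ.Walk w w) (Q : Γ.Walk w v),
      Γ.IsLooseHandcuff C₁ P C₂ ∧ Q.IsReverseOf P ∧
        W = C₁.append (P.append (C₂.append Q))

/-- A circuit walk: a rotation of a basic circuit walk. -/
def IsCircuitWalk (Γ : SGraph V E) {v : V} (W : Γ.Walk v v) : Prop :=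
  ∃ (u : V) (A : Γ.Walk u v) (B : Γ.Walk v u),
    W = B.append A ∧ Γ.IsBasicCircuitWalk (A.append B)

/-- `e` is a circuit path edge: it lies on the connecting path of an unbalanced
loose handcuff. -/
def IsCircuitPathEdge (Γ : SGraph V E) (e : E) : Prop :=
  ∃ (u w : V) (C₁ : Γ.Walk u u) (P : Γ.Walk u w) (C₂ : Γ.Walk w w),
    Γ.IsLooseHandcuff C₁ P C₂ ∧ e ∈ P.edges

/-- Adjacency via an edge. -/
def Adj (Γ : SGraph V E) (a b : V) : Prop := ∃ e, Γ.ends e = (a, b) ∨ Γ.ends e = (b, a)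

/-- The set of connected components. -/
def Components (Γ : SGraph V E) : Type _ := Quot Γ.Adj

/-- The connected component of a vertex. -/
def comp (Γ : SGraph V E) (v : V) : Γ.Components := Quot.mk _ v

/-- The number `k(Γ)` of connected components. -/
def kAll (Γ : SGraph V E) : ℕ := Nat.card Γ.Components

/-- A connected component is balanced if every cycle it contains is balanced. -/
def IsBalancedComponent (Γ : SGraph V E) (c : Γ.Components) : Prop :=
  ∀ v : V, Γ.comp v = c → ∀ W : Γ.Walk v v, Γ.IsCycle W → W.sgn = 1

/-- The number `k_b(Σ)` of balanced connected components. -/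
def kb (Γ : SGraph V E) : ℕ := Nat.card {c : Γ.Components // Γ.IsBalancedComponent c}

/-- The number `k_u(Σ)` of unbalanced connected components. -/
def ku (Γ : SGraph V E) : ℕ := Nat.card {c : Γ.Components // ¬ Γ.IsBalancedComponent c}

/-- A signed graph is balanced if all its cycles are balanced. -/
def Balanced (Γ : SGraph V E) : Prop :=
  ∀ (v : V) (W : Γ.Walk v v), Γ.IsCycle W → W.sgn = 1

/-- A signed graph is connected if it has exactly one connected component. -/
def Connected (Γ : SGraph V E) : Prop := Γ.kAll = 1

/-- The spanning subgraph `Σ \ Aᶜ` with edge set `A`. -/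
def restrict (Γ : SGraph V E) (A : Set E) : SGraph V A :=
  { ends := fun e => Γ.ends e, sign := fun e => Γ.sign e }

/-- The signed Tutte polynomial (as a function of `x`, `y`, `z`):
`T_Σ(X,Y,Z) = Σ_{A⊆E} (X−1)^{k(Σ\Aᶜ)−k(Σ)} (Y−1)^{|A|−|V|+k_b(Σ\Aᶜ)} (Z−1)^{k_u(Σ\Aᶜ)}`. -/
def signedTutte {K : Type*} [CommRing K] (Γ : SGraph V E) (x y z : K) : K :=
  ∑ᶠ A : Finset E,
    (x - 1) ^ ((Γ.restrict (A : Set E)).kAll - Γ.kAll) *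
      (y - 1) ^ ((A.card + (Γ.restrict (A : Set E)).kb) - Nat.card V) *
        (z - 1) ^ (Γ.restrict (A : Set E)).ku

/-- Deletion of an edge. -/
def deleteEdge (Γ : SGraph V E) (e : E) : SGraph V {e' : E // e' ≠ e} :=
  { ends := fun e' => Γ.ends e'.1, sign := fun e' => Γ.sign e'.1 }

/-- The relation identifying the two endpoints of `e`. -/
def contractRel (Γ : SGraph V E) (e : E) (a b : V) : Prop := (a, b) = Γ.ends e

/-- Contraction of an edge: the two endpoints are identified and the edge is
deleted.  (For a loop this is just deletion, as the identification is trivial.) -/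
def contract (Γ : SGraph V E) (e : E) : SGraph (Quot (Γ.contractRel e)) {e' : E // e' ≠ e} :=
  { ends := fun e' => (Quot.mk _ (Γ.ends e'.1).1, Quot.mk _ (Γ.ends e'.1).2),
    sign := fun e' => Γ.sign e'.1 }

/-- `e` is a bridge: its deletion increases the number of connected components. -/
def IsBridge (Γ : SGraph V E) (e : E) : Prop := Γ.kAll < (Γ.deleteEdge e).kAll

/-- An orientation of the half-edges, compatible with the signature. -/
def IsCompatible (Γ : SGraph V E) (ω : E → Bool → ℤˣ) : Prop :=
  ∀ e, Γ.sign e = -(ω e true * ω e false)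

/-- A `G`-flow: Kirchhoff's law holds at every vertex. -/
def IsFlow (Γ : SGraph V E) (ω : E → Bool → ℤˣ) {G : Type*} [AddCommGroup G]
    (f : E → G) : Prop :=
  ∀ v : V,
    (∑ᶠ e : E, ((if Γ.endpt e true = v then (ω e true : ℤ) • f e else 0) +
      (if Γ.endpt e false = v then (ω e false : ℤ) • f e else 0))) = 0

/-- A `G`-tension: the alternating sum along every circuit walk vanishes. -/
def IsTension (Γ : SGraph V E) (ω : E → Bool → ℤˣ) {G : Type*} [AddCommGroup G]
    (f : E → G) : Prop :=
  ∀ (v : V) (W : Γ.Walk v v), Γ.IsCircuitWalk W → W.tensionSum ω f = 0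

end SGraph

/-- The doubling homomorphism `x ↦ x + x = 2x` of an abelian group. -/
def doubleHom (G : Type*) [AddCommGroup G] : G →+ G :=
  AddMonoidHom.mk' (fun x => x + x) (fun a b => add_add_add_comm a b a b)

/-- The subgroup `2G = {2x : x ∈ G}`. -/
def twoG (G : Type*) [AddCommGroup G] : AddSubgroup G := (doubleHom G).range

/-- The `2`-torsion subgroup `G₂ = {x ∈ G : 2x = 0}`. -/
def torsion2 (G : Type*) [AddCommGroup G] : AddSubgroup G := (doubleHom G).ker

namespace SGraph

variable {V E : Type*}

/-- A `G`-potential difference: a `G`-tension whose sum around every unbalanced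
cycle lies in `2G`. -/
def IsPotentialDifference (Γ : SGraph V E) (ω : E → Bool → ℤˣ) {G : Type*} [AddCommGroup G]
    (f : E → G) : Prop :=
  Γ.IsTension ω f ∧
    ∀ (v : V) (W : Γ.Walk v v), Γ.IsUnbalancedCycle W → W.edgeSum f ∈ twoG G

end SGraph

namespace SGraph

variable {V E : Type*}

/-- Proper coloring by elements of a set `X` with involution `ι`: adjacent
endpoints of a positive edge get different colors, and for a negative edge the
`ι`-image of one endpoint's color differs from the other endpoint's color. -/
def IsProperInvColoring (Γ : SGraph V E) {X : Type*} (ι : X → X) (f : V → X) : Prop :=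
  ∀ e : E, (Γ.sign e = 1 → f ((Γ.ends e).1) ≠ f ((Γ.ends e).2)) ∧
    (Γ.sign e = -1 → ι (f ((Γ.ends e).1)) ≠ f ((Γ.ends e).2))

/-- A proper `G`-coloring: for every edge `e = uv`, `f(u) ≠ f(v)` if `e` is
positive and `-f(u) ≠ f(v)` if `e` is negative, i.e. `σ(e)•f(u) ≠ f(v)`. -/
def IsProperColoring (Γ : SGraph V E) {G : Type*} [AddCommGroup G] (f : V → G) : Prop :=
  ∀ e : E, ((Γ.sign e : ℤ) • f ((Γ.ends e).1)) ≠ f ((Γ.ends e).2)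

/-- Zaslavsky's proper `n`-coloring: colors in `{0, ±1, …, ±n}` with
`f(u) ≠ σ(e)·f(v)` for every edge `e = uv`. -/
def IsProperNColoring (Γ : SGraph V E) (n : ℕ) (f : V → ℤ) : Prop :=
  (∀ v, |f v| ≤ (n : ℤ)) ∧
    ∀ e : E, f ((Γ.ends e).1) ≠ (Γ.sign e : ℤ) * f ((Γ.ends e).2)

/-- `T ⊆ E` is a spanning tree: the spanning subgraph `(V,T)` is connected and
contains no cycle. -/
def IsSpanningTree (Γ : SGraph V E) (T : Set E) : Prop :=
  (Γ.restrict T).Connected ∧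
    ∀ (v : V) (W : (Γ.restrict T).Walk v v), ¬ (Γ.restrict T).IsCycle W

/-- A connected basis of a connected signed graph: a spanning tree if `Σ` is
balanced; otherwise a spanning tree plus one extra edge closing an unbalanced
cycle. -/
def IsConnectedBasis (Γ : SGraph V E) (B : Set E) : Prop :=
  (Γ.Balanced ∧ Γ.IsSpanningTree B) ∨
    (¬ Γ.Balanced ∧ ∃ (T : Set E) (e : E), Γ.IsSpanningTree T ∧ e ∉ T ∧ B = insert e T ∧
      ∀ (v : V) (W : (Γ.restrict B).Walk v v), (Γ.restrict B).IsCycle W → W.sgn = -1)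

/-- Switching at a vertex `v`: the sign of every non-loop edge incident with `v`
is negated; loops keep their sign. -/
def switchAt (Γ : SGraph V E) (v : V) : SGraph V E :=
  { ends := Γ.ends,
    sign := fun e => if ((Γ.ends e).1 = v ↔ (Γ.ends e).2 = v) then Γ.sign e else -Γ.sign e }

/-- Switching at a set `S` of vertices (the composite of the switchings at the
vertices of `S`): the sign of an edge is negated iff exactly one of its
endpoints lies in `S`. -/
def switchSet (Γ : SGraph V E) (S : Set V) : SGraph V E :=
  { ends := Γ.ends,
    sign := fun e => if ((Γ.ends e).1 ∈ S ↔ (Γ.ends e).2 ∈ S) then Γ.sign e else -Γ.sign e }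

/-- Isomorphism of signed graphs (as undirected signed multigraphs). -/
def Iso {V₁ E₁ V₂ E₂ : Type*} (Γ₁ : SGraph V₁ E₁) (Γ₂ : SGraph V₂ E₂) : Prop :=
  ∃ (φ : V₁ ≃ V₂) (ψ : E₁ ≃ E₂), ∀ e : E₁,
    (Γ₂.ends (ψ e) = (φ (Γ₁.ends e).1, φ (Γ₁.ends e).2) ∨
      Γ₂.ends (ψ e) = (φ (Γ₁.ends e).2, φ (Γ₁.ends e).1)) ∧
    Γ₂.sign (ψ e) = Γ₁.sign e

/-- Switching equivalence: isomorphism after switching at a set of vertices. -/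
def SwitchEquiv {V₁ E₁ V₂ E₂ : Type*} (Γ₁ : SGraph V₁ E₁) (Γ₂ : SGraph V₂ E₂) : Prop :=
  ∃ S : Set V₁, Iso (Γ₁.switchSet S) Γ₂

/-- Disjoint union of signed graphs. -/
def disjUnion {V₁ E₁ V₂ E₂ : Type*} (Γ₁ : SGraph V₁ E₁) (Γ₂ : SGraph V₂ E₂) :
    SGraph (V₁ ⊕ V₂) (E₁ ⊕ E₂) where
  ends := fun e => match e with
    | .inl e => (Sum.inl (Γ₁.ends e).1, Sum.inl (Γ₁.ends e).2)
    | .inr e => (Sum.inr (Γ₂.ends e).1, Sum.inr (Γ₂.ends e).2)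
  sign := fun e => match e with
    | .inl e => Γ₁.sign e
    | .inr e => Γ₂.sign e

/-- The difference operator `δ : G^V → G^E`,
`(δg)(e) = ω(v,e)·g(v) + ω(u,e)·g(u)` for `e = uv`. -/
def deltaHom (Γ : SGraph V E) (ω : E → Bool → ℤˣ) (G : Type*) [AddCommGroup G] :
    (V → G) →+ (E → G) :=
  AddMonoidHom.mk'
    (fun g e => (ω e true : ℤ) • g ((Γ.ends e).1) + (ω e false : ℤ) • g ((Γ.ends e).2))
    (by
      intro a b
      funext e
      simp only [Pi.add_apply, smul_add]
      abel)

end SGraph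

end SignedGraphs
section AuxLemmas

namespace SGraph

variable {V E : Type*} {Γ : SGraph V E} {G : Type*} [AddCommGroup G]

namespace Walk

@[simp] lemma nil_verts (x : V) : (Walk.nil (Γ := Γ) x).verts = [x] := rfl
@[simp] lemma cons_verts (e : E) (d : Bool) {w : V} (p : Γ.Walk (Γ.endpt e (!d)) w) :
    (Walk.cons e d p).verts = Γ.endpt e d :: p.verts := rfl
@[simp] lemma nil_edges (x : V) : (Walk.nil (Γ := Γ) x).edges = [] := rfl
@[simp] lemma cons_edges (e : E) (d : Bool) {w : V} (p : Γ.Walk (Γ.endpt e (!d)) w) :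
    (Walk.cons e d p).edges = e :: p.edges := rfl
@[simp] lemma nil_steps (x : V) : (Walk.nil (Γ := Γ) x).steps = [] := rfl
@[simp] lemma cons_steps (e : E) (d : Bool) {w : V} (p : Γ.Walk (Γ.endpt e (!d)) w) :
    (Walk.cons e d p).steps = (e, d) :: p.steps := rfl
@[simp] lemma nil_sgn (x : V) : (Walk.nil (Γ := Γ) x).sgn = 1 := rfl
@[simp] lemma cons_sgn (e : E) (d : Bool) {w : V} (p : Γ.Walk (Γ.endpt e (!d)) w) :
    (Walk.cons e d p).sgn = Γ.sign e * p.sgn := rfl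
@[simp] lemma nil_append {u v : V} (q : Γ.Walk u v) : (Walk.nil u).append q = q := rfl
@[simp] lemma cons_append (e : E) (d : Bool) {w x : V} (p : Γ.Walk (Γ.endpt e (!d)) w)
    (q : Γ.Walk w x) : (Walk.cons e d p).append q = Walk.cons e d (p.append q) := rfl
@[simp] lemma nil_tensionSum (ω : E → Bool → ℤˣ) (f : E → G) (x : V) :
    (Walk.nil (Γ := Γ) x).tensionSum ω f = 0 := rfl
@[simp] lemma cons_tensionSum (ω : E → Bool → ℤˣ) (f : E → G) (e : E) (d : Bool) {w : V}
    (p : Γ.Walk (Γ.endpt e (!d)) w) :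
    (Walk.cons e d p).tensionSum ω f
      = ((ω e d : ℤ) • f e) + ((Γ.sign e : ℤ) • p.tensionSum ω f) := rfl

lemma verts_ne_nil : ∀ {u v : V} (W : Γ.Walk u v), W.verts ≠ []
  | _, _, .nil _ => by simp
  | _, _, .cons e d p => by simp

lemma verts_eq_srcs_concat : ∀ {u v : V} (W : Γ.Walk u v), W.verts = W.srcs ++ [v]
  | _, _, .nil x => rfl
  | _, _, .cons e d p => by
      have ih := verts_eq_srcs_concat p
      show Γ.endpt e d :: p.verts = (Γ.endpt e d :: p.verts).dropLast ++ _
      rw [ih]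
      rw [show Γ.endpt e d :: (p.srcs ++ [_]) = (Γ.endpt e d :: p.srcs) ++ [_] from rfl,
        List.dropLast_concat]

@[simp] lemma nil_srcs (x : V) : (Walk.nil (Γ := Γ) x).srcs = [] := rfl

@[simp] lemma cons_srcs (e : E) (d : Bool) {w : V} (p : Γ.Walk (Γ.endpt e (!d)) w) :
    (Walk.cons e d p).srcs = Γ.endpt e d :: p.srcs := by
  have h := verts_eq_srcs_concat (Walk.cons e d p)
  have h2 := verts_eq_srcs_concat p
  simp only [cons_verts] at h
  rw [h2, show Γ.endpt e d :: (p.srcs ++ [w]) = (Γ.endpt e d :: p.srcs) ++ [w] from rfl] at h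
  exact (List.append_cancel_right h).symm

lemma mem_verts_of_mem_srcs {u v x : V} {W : Γ.Walk u v} (h : x ∈ W.srcs) : x ∈ W.verts := by
  rw [verts_eq_srcs_concat]; exact List.mem_append_left _ h

lemma start_mem_verts : ∀ {u v : V} (W : Γ.Walk u v), u ∈ W.verts
  | _, _, .nil _ => by simp
  | _, _, .cons e d p => by simp

lemma end_mem_verts {u v : V} (W : Γ.Walk u v) : v ∈ W.verts := by
  rw [verts_eq_srcs_concat]; simp

lemma start_mem_srcs : ∀ {u v : V} (W : Γ.Walk u v), W.edges ≠ [] → u ∈ W.srcs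
  | _, _, .nil _ => by simp
  | _, _, .cons e d p => by simp

lemma verts_append : ∀ {u v w : V} (P : Γ.Walk u v) (Q : Γ.Walk v w),
    (P.append Q).verts = P.srcs ++ Q.verts
  | _, _, _, .nil _, q => by simp
  | _, _, _, .cons e d p, q => by simp [verts_append p q]

lemma srcs_append {u v w : V} (P : Γ.Walk u v) (Q : Γ.Walk v w) :
    (P.append Q).srcs = P.srcs ++ Q.srcs := by
  have h := verts_eq_srcs_concat (P.append Q)
  rw [verts_append, verts_eq_srcs_concat Q, ← List.append_assoc] at h
  exact (List.append_cancel_right h).symm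

lemma edges_append : ∀ {u v w : V} (P : Γ.Walk u v) (Q : Γ.Walk v w),
    (P.append Q).edges = P.edges ++ Q.edges
  | _, _, _, .nil _, q => by simp
  | _, _, _, .cons e d p, q => by simp [edges_append p q]

lemma steps_append : ∀ {u v w : V} (P : Γ.Walk u v) (Q : Γ.Walk v w),
    (P.append Q).steps = P.steps ++ Q.steps
  | _, _, _, .nil _, q => by simp
  | _, _, _, .cons e d p, q => by simp [steps_append p q]

lemma sgn_append : ∀ {u v w : V} (P : Γ.Walk u v) (Q : Γ.Walk v w),
    (P.append Q).sgn = P.sgn * Q.sgn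
  | _, _, _, .nil _, q => by simp
  | _, _, _, .cons e d p, q => by simp [sgn_append p q, mul_assoc]

lemma append_nil : ∀ {u v : V} (P : Γ.Walk u v), P.append (Walk.nil v) = P
  | _, _, .nil _ => rfl
  | _, _, .cons e d p => by simp [append_nil p]

lemma append_assoc : ∀ {u v w x : V} (P : Γ.Walk u v) (Q : Γ.Walk v w) (R : Γ.Walk w x),
    (P.append Q).append R = P.append (Q.append R)
  | _, _, _, _, .nil _, q, r => rfl
  | _, _, _, _, .cons e d p, q, r => by simp [append_assoc p q r]

lemma tensionSum_append (ω : E → Bool → ℤˣ) (f : E → G) :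
    ∀ {u v w : V} (P : Γ.Walk u v) (Q : Γ.Walk v w),
    (P.append Q).tensionSum ω f = P.tensionSum ω f + (P.sgn : ℤ) • Q.tensionSum ω f
  | _, _, _, .nil _, q => by simp
  | _, _, _, .cons e d p, q => by
      simp [tensionSum_append ω f p q, smul_add, smul_smul, add_assoc]

lemma sgn_eq_prod : ∀ {u v : V} (W : Γ.Walk u v), W.sgn = (W.edges.map Γ.sign).prod
  | _, _, .nil _ => by simp
  | _, _, .cons e d p => by simp [sgn_eq_prod p]

lemma edges_eq_steps_map : ∀ {u v : V} (W : Γ.Walk u v), W.edges = W.steps.map Prod.fst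
  | _, _, .nil _ => by simp
  | _, _, .cons e d p => by simp [edges_eq_steps_map p]

lemma tensionSum_eq_zero (ω : E → Bool → ℤˣ) (f : E → G) :
    ∀ {u v : V} (W : Γ.Walk u v), (∀ e ∈ W.edges, f e = 0) → W.tensionSum ω f = 0
  | _, _, .nil _, _ => rfl
  | _, _, .cons e d p, h => by
      have h1 : f e = 0 := h e (by simp)
      have h2 := tensionSum_eq_zero ω f p (fun e' he' => h e' (by simp [he']))
      simp [h1, h2]

lemma tensionSum_sub (ω : E → Bool → ℤˣ) (f g : E → G) :
    ∀ {u v : V} (W : Γ.Walk u v),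
      W.tensionSum ω (f - g) = W.tensionSum ω f - W.tensionSum ω g
  | _, _, .nil _ => by simp
  | _, _, .cons e d p => by
      simp [tensionSum_sub ω f g p, smul_sub]
      abel

end Walk

end SGraph

end AuxLemmas
section AuxB

namespace SGraph

variable {V E : Type*} {Γ : SGraph V E} {G : Type*} [AddCommGroup G]

namespace Walk

/-- Single-edge walk traversing `e` against direction `d`. -/
def erev (Γ : SGraph V E) (e : E) : ∀ d : Bool, Γ.Walk (Γ.endpt e (!d)) (Γ.endpt e d)
  | true => .cons e false (.nil _)
  | false => .cons e true (.nil _)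

@[simp] lemma erev_steps (e : E) (d : Bool) : (erev Γ e d).steps = [(e, !d)] := by
  cases d <;> rfl
@[simp] lemma erev_edges (e : E) (d : Bool) : (erev Γ e d).edges = [e] := by
  cases d <;> rfl
@[simp] lemma erev_verts (e : E) (d : Bool) :
    (erev Γ e d).verts = [Γ.endpt e (!d), Γ.endpt e d] := by cases d <;> rfl
@[simp] lemma erev_sgn (e : E) (d : Bool) : (erev Γ e d).sgn = Γ.sign e := by
  cases d <;> simp [erev]
@[simp] lemma erev_tensionSum (ω : E → Bool → ℤˣ) (f : E → G) (e : E) (d : Bool) :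
    (erev Γ e d).tensionSum ω f = (ω e (!d) : ℤ) • f e := by cases d <;> simp [erev]

/-- Reversal of a walk. -/
def reverse : ∀ {u v : V}, Γ.Walk u v → Γ.Walk v u
  | _, _, .nil x => .nil x
  | _, _, .cons e d p => (reverse p).append (erev Γ e d)

@[simp] lemma reverse_nil (x : V) : (Walk.nil (Γ := Γ) x).reverse = .nil x := rfl

lemma steps_reverse : ∀ {u v : V} (W : Γ.Walk u v),
    W.reverse.steps = W.steps.reverse.map (fun s => (s.1, !s.2))
  | _, _, .nil _ => rfl
  | _, _, .cons e d p => by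
      simp [reverse, steps_append, steps_reverse p]

lemma isReverseOf_reverse {u v : V} (W : Γ.Walk u v) : W.reverse.IsReverseOf W :=
  steps_reverse W

lemma edges_reverse {u v : V} (W : Γ.Walk u v) : W.reverse.edges = W.edges.reverse := by
  rw [edges_eq_steps_map, steps_reverse, edges_eq_steps_map, ← List.map_reverse,
    List.map_map]
  rfl

lemma sgn_reverse : ∀ {u v : V} (W : Γ.Walk u v), W.reverse.sgn = W.sgn
  | _, _, .nil _ => rfl
  | _, _, .cons e d p => by
      simp [reverse, sgn_append, sgn_reverse p, mul_comm]

lemma verts_head : ∀ {u v : V} (W : Γ.Walk u v), W.verts = u :: W.verts.tail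
  | _, _, .nil _ => rfl
  | _, _, .cons _ _ _ => rfl

lemma verts_reverse : ∀ {u v : V} (W : Γ.Walk u v), W.reverse.verts = W.verts.reverse
  | _, _, .nil _ => rfl
  | _, _, .cons e d p => by
      have hh := verts_head p
      rw [reverse, verts_append, erev_verts, cons_verts, List.reverse_cons]
      have h1 : (reverse p).srcs = ((reverse p).verts).dropLast := rfl
      rw [h1, verts_reverse p, hh, List.reverse_cons, List.dropLast_concat]
      simp [hh.symm]

lemma tensionSum_reverse (ω : E → Bool → ℤˣ) (hω : Γ.IsCompatible ω) (f : E → G) :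
    ∀ {u v : V} (W : Γ.Walk u v),
      W.reverse.tensionSum ω f = -((W.sgn : ℤ) • W.tensionSum ω f)
  | _, _, .nil _ => by simp
  | _, _, .cons e d p => by
      have ih := tensionSum_reverse ω hω f p
      rw [reverse, tensionSum_append, ih, sgn_reverse, erev_tensionSum]
      rcases Int.units_eq_one_or (ω e true) with h1 | h1 <;>
        rcases Int.units_eq_one_or (ω e false) with h2 | h2 <;>
          rcases Int.units_eq_one_or p.sgn with h3 | h3 <;>
            cases d <;>
              simp [hω e, h1, h2, h3, smul_add, smul_smul] <;> abel

lemma tensionSum_single (ω : E → Bool → ℤˣ) (f : E → G) (e₀ : E) :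
    ∀ {u v : V} (W : Γ.Walk u v), (∀ e ∈ W.edges, e ≠ e₀ → f e = 0) →
      W.edges.count e₀ = 1 →
      ∃ c : ℤˣ, W.tensionSum ω f = (c : ℤ) • f e₀
  | _, _, .nil _, _, hc => by simp at hc
  | _, _, .cons e d p, h, hc => by
      by_cases he : e = e₀
      · subst he
        have h0 : p.edges.count e = 0 := by
          have := hc
          simp [List.count_cons] at this
          exact this
        have hz : p.tensionSum ω f = 0 := by
          refine tensionSum_eq_zero ω f p (fun e' he' => ?_)
          refine h e' (by simp [he']) (fun hcon => ?_)
          subst hcon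
          exact absurd he' (List.count_eq_zero.1 h0)
        exact ⟨ω e d, by simp [hz]⟩
      · have h1 : p.edges.count e₀ = 1 := by
          have := hc
          simp [List.count_cons, he] at this
          exact this
        obtain ⟨c, hcval⟩ := tensionSum_single ω f e₀ p
          (fun e' he' => h e' (by simp [he'])) h1
        refine ⟨Γ.sign e * c, ?_⟩
        simp [h e (by simp) he, hcval, smul_smul]

lemma mem_verts_of_mem_edges : ∀ {u v : V} (W : Γ.Walk u v) {e : E}, e ∈ W.edges →
    ∀ d : Bool, Γ.endpt e d ∈ W.verts
  | _, _, .cons e' d' p, e, he, d => by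
      rcases List.mem_cons.1 he with h | h
      · subst h
        cases d <;> cases d' <;>
          first
            | exact List.mem_cons_self
            | exact List.mem_cons_of_mem _ (start_mem_verts p)
      · exact List.mem_cons_of_mem _ (mem_verts_of_mem_edges p h d)

lemma nodup_edges_of_nodup_verts : ∀ {u v : V} (W : Γ.Walk u v),
    W.verts.Nodup → W.edges.Nodup
  | _, _, .nil _, _ => by simp
  | _, _, .cons e d p, h => by
      rw [cons_verts, List.nodup_cons] at h
      rw [cons_edges, List.nodup_cons]
      exact ⟨fun hmem => h.1 (mem_verts_of_mem_edges p hmem d),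
        nodup_edges_of_nodup_verts p h.2⟩

lemma split_first (P : V → Prop) : ∀ {u v : V} (W : Γ.Walk u v), (∃ x ∈ W.verts, P x) →
    ∃ (x : V) (W₁ : Γ.Walk u x) (W₂ : Γ.Walk x v),
      W = W₁.append W₂ ∧ P x ∧ ∀ y ∈ W₁.srcs, ¬ P y
  | _, _, .nil z, h => by
      obtain ⟨x, hx, hPx⟩ := h
      simp at hx
      subst hx
      exact ⟨_, .nil _, .nil _, rfl, hPx, by simp⟩
  | _, _, .cons e d p, h => by
      by_cases hP : P (Γ.endpt e d)
      · exact ⟨_, .nil _, .cons e d p, rfl, hP, by simp⟩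
      · have hx : ∃ x ∈ p.verts, P x := by
          obtain ⟨x, hx, hPx⟩ := h
          rcases List.mem_cons.1 hx with h' | h'
          · exact absurd hPx (h' ▸ hP)
          · exact ⟨x, h', hPx⟩
        obtain ⟨x, W₁, W₂, heq, hPx, hnone⟩ := split_first P p hx
        refine ⟨x, .cons e d W₁, W₂, by rw [cons_append, ← heq], hPx, ?_⟩
        intro y hy
        rw [cons_srcs, List.mem_cons] at hy
        rcases hy with hy | hy
        · exact hy ▸ hP
        · exact hnone y hy

lemma split_last (P : V → Prop) : ∀ {u v : V} (W : Γ.Walk u v), (∃ x ∈ W.verts, P x) →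
    ∃ (x : V) (W₁ : Γ.Walk u x) (W₂ : Γ.Walk x v),
      W = W₁.append W₂ ∧ P x ∧ ∀ y ∈ W₂.verts.tail, ¬ P y
  | _, _, .nil z, h => by
      obtain ⟨x, hx, hPx⟩ := h
      simp at hx
      subst hx
      exact ⟨_, .nil _, .nil _, rfl, hPx, by simp⟩
  | _, _, .cons e d p, h => by
      by_cases hp : ∃ x ∈ p.verts, P x
      · obtain ⟨x, W₁, W₂, heq, hPx, hnone⟩ := split_last P p hp
        exact ⟨x, .cons e d W₁, W₂, by rw [cons_append, ← heq], hPx, hnone⟩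
      · push_neg at hp
        obtain ⟨x, hx, hPx⟩ := h
        rcases List.mem_cons.1 hx with h' | h'
        · subst h'
          exact ⟨_, .nil _, .cons e d p, rfl, hPx, by simpa using hp⟩
        · exact absurd hPx (hp x h')

lemma split_edge : ∀ {u v : V} (W : Γ.Walk u v) (e : E), e ∈ W.edges →
    ∃ (d : Bool) (W₁ : Γ.Walk u (Γ.endpt e d)) (W₂ : Γ.Walk (Γ.endpt e (!d)) v),
      W = W₁.append (Walk.cons e d W₂) ∧ e ∉ W₁.edges
  | _, _, .cons e' d' p, e, he => by
      by_cases h : e' = e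
      · subst h
        exact ⟨d', .nil _, p, rfl, by simp⟩
      · have hmem : e ∈ p.edges := by
          rcases List.mem_cons.1 he with h' | h'
          · exact absurd h'.symm h
          · exact h'
        obtain ⟨d, W₁, W₂, heq, hni⟩ := split_edge p e hmem
        refine ⟨d, .cons e' d' W₁, W₂, by rw [cons_append, ← heq], ?_⟩
        simp [hni, Ne.symm h]

lemma verts_of_edges_nil : ∀ {u v : V} (W : Γ.Walk u v), W.edges = [] → W.verts = [u]
  | _, _, .nil _, _ => rfl
  | _, _, .cons _ _ _, h => by simp at h

lemma closed_nodup_trivial : ∀ {u : V} (W : Γ.Walk u u), W.verts.Nodup → W.edges = []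
  | _, .nil _, _ => rfl
  | _, .cons e d p, h => by
      rw [cons_verts, List.nodup_cons] at h
      exact absurd (end_mem_verts p) h.1

lemma exists_path : ∀ {u v : V} (W : Γ.Walk u v),
    ∃ P : Γ.Walk u v, P.verts.Nodup ∧ ∀ e ∈ P.edges, e ∈ W.edges
  | _, _, .nil x => ⟨.nil x, by simp, by simp⟩
  | _, _, .cons e d p => by
      obtain ⟨q, hq, hsub⟩ := exists_path p
      by_cases hmem : Γ.endpt e d ∈ q.verts
      · obtain ⟨x, q₁, q₂, heq, hx, -⟩ := split_first (· = Γ.endpt e d) q ⟨_, hmem, rfl⟩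
        subst hx
        refine ⟨q₂, ?_, ?_⟩
        · have : (q₁.append q₂).verts.Nodup := heq ▸ hq
          rw [verts_append] at this
          exact this.of_append_right
        · intro e' he'
          have : e' ∈ q.edges := by
            rw [heq, edges_append]
            exact List.mem_append_right _ he'
          exact List.mem_cons_of_mem _ (hsub e' this)
      · refine ⟨.cons e d q, by simp [hq, hmem], ?_⟩
        intro e' he'
        rcases List.mem_cons.1 he' with h' | h'
        · simp [h']
        · exact List.mem_cons_of_mem _ (hsub e' h')

lemma unit_smul_eq_zero_iff (u : ℤˣ) (x : G) : (u : ℤ) • x = 0 ↔ x = 0 := by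
  rcases Int.units_eq_one_or u with h | h <;> simp [h, neg_eq_zero]

end Walk

end SGraph

end AuxB
section AuxC

namespace SGraph

variable {V E : Type*} {Γ : SGraph V E} {G : Type*} [AddCommGroup G]

namespace Walk

/-- Change the start point of a walk along an equality. -/
def castStart {u u' v : V} (h : u = u') (W : Γ.Walk u v) : Γ.Walk u' v := h ▸ W

@[simp] lemma castStart_edges {u u' v : V} (h : u = u') (W : Γ.Walk u v) :
    (castStart h W).edges = W.edges := by subst h; rfl
@[simp] lemma castStart_verts {u u' v : V} (h : u = u') (W : Γ.Walk u v) :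
    (castStart h W).verts = W.verts := by subst h; rfl
@[simp] lemma castStart_srcs {u u' v : V} (h : u = u') (W : Γ.Walk u v) :
    (castStart h W).srcs = W.srcs := by subst h; rfl
@[simp] lemma castStart_sgn {u u' v : V} (h : u = u') (W : Γ.Walk u v) :
    (castStart h W).sgn = W.sgn := by subst h; rfl
@[simp] lemma castStart_tensionSum (ω : E → Bool → ℤˣ) (f : E → G) {u u' v : V}
    (h : u = u') (W : Γ.Walk u v) :
    (castStart h W).tensionSum ω f = W.tensionSum ω f := by subst h; rfl
@[simp] lemma castStart_steps {u u' v : V} (h : u = u') (W : Γ.Walk u v) :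
    (castStart h W).steps = W.steps := by subst h; rfl

/-- Project a walk in a restriction to the ambient graph. -/
def ofRestrict {A : Set E} : ∀ {u v : V}, (Γ.restrict A).Walk u v → Γ.Walk u v
  | _, _, .nil x => .nil x
  | _, _, .cons e d p => .cons e.1 d (ofRestrict p)

@[simp] lemma ofRestrict_verts {A : Set E} :
    ∀ {u v : V} (W : (Γ.restrict A).Walk u v), (ofRestrict W).verts = W.verts
  | _, _, .nil _ => rfl
  | _, _, .cons e d p => by exact congrArg (Γ.endpt e.1 d :: ·) (ofRestrict_verts p)

@[simp] lemma ofRestrict_edges {A : Set E} :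
    ∀ {u v : V} (W : (Γ.restrict A).Walk u v),
      (ofRestrict W).edges = W.edges.map Subtype.val
  | _, _, .nil _ => rfl
  | _, _, .cons e d p => by exact congrArg (e.1 :: ·) (ofRestrict_edges p)

@[simp] lemma ofRestrict_sgn {A : Set E} :
    ∀ {u v : V} (W : (Γ.restrict A).Walk u v), (ofRestrict W).sgn = W.sgn
  | _, _, .nil _ => rfl
  | _, _, .cons e d p => by
      exact congrArg (Γ.sign e.1 * ·) (ofRestrict_sgn p)

lemma ofRestrict_mem {A : Set E} {u v : V} (W : (Γ.restrict A).Walk u v) :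
    ∀ e ∈ (ofRestrict W).edges, e ∈ A := by
  rw [ofRestrict_edges]
  intro e he
  obtain ⟨e', -, rfl⟩ := List.mem_map.1 he
  exact e'.2

/-- Lift a walk whose edges lie in `A` to the restriction. -/
def toRestrict {A : Set E} : ∀ {u v : V} (W : Γ.Walk u v),
    (∀ e ∈ W.edges, e ∈ A) → (Γ.restrict A).Walk u v
  | _, _, .nil x, _ => .nil x
  | _, _, .cons e d p, h =>
      Walk.cons (Γ := Γ.restrict A) ⟨e, h e List.mem_cons_self⟩ d
        (toRestrict p (fun e' he' => h e' (List.mem_cons_of_mem _ he')))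

lemma toRestrict_verts {A : Set E} : ∀ {u v : V} (W : Γ.Walk u v)
    (h : ∀ e ∈ W.edges, e ∈ A), (toRestrict W h).verts = W.verts
  | _, _, .nil _, _ => rfl
  | _, _, .cons e d p, h => by
      exact congrArg (Γ.endpt e d :: ·) (toRestrict_verts p _)

lemma toRestrict_edges {A : Set E} : ∀ {u v : V} (W : Γ.Walk u v)
    (h : ∀ e ∈ W.edges, e ∈ A), (toRestrict W h).edges.map Subtype.val = W.edges
  | _, _, .nil _, _ => rfl
  | _, _, .cons e d p, h => by
      exact congrArg (e :: ·) (toRestrict_edges p _)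

lemma toRestrict_sgn {A : Set E} : ∀ {u v : V} (W : Γ.Walk u v)
    (h : ∀ e ∈ W.edges, e ∈ A), (toRestrict W h).sgn = W.sgn
  | _, _, .nil _, _ => rfl
  | _, _, .cons e d p, h => by
      exact congrArg (Γ.sign e * ·) (toRestrict_sgn p _)

lemma toRestrict_isCycle {A : Set E} {v : V} (W : Γ.Walk v v)
    (h : ∀ e ∈ W.edges, e ∈ A) (hc : Γ.IsCycle W) :
    (Γ.restrict A).IsCycle (toRestrict W h) := by
  obtain ⟨h1, h2, h3⟩ := hc
  refine ⟨?_, ?_, ?_⟩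
  · intro hcon
    apply h1
    rw [← toRestrict_edges W h, hcon]; rfl
  · have : (toRestrict W h).srcs = W.srcs := by
      show (toRestrict W h).verts.dropLast = W.verts.dropLast
      rw [toRestrict_verts]
    rwa [this]
  · have := toRestrict_edges W h
    exact List.Nodup.of_map Subtype.val (this ▸ h3)

end Walk

open Walk

lemma no_cycle_in_set {A : Set E}
    (hA : ∀ (v : V) (W : (Γ.restrict A).Walk v v), ¬ (Γ.restrict A).IsCycle W) :
    ∀ (v : V) (W : Γ.Walk v v), (∀ e ∈ W.edges, e ∈ A) → ¬ Γ.IsCycle W :=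
  fun v W hsub hc => hA v (toRestrict W hsub) (toRestrict_isCycle W hsub hc)

lemma no_loop_in_set {A : Set E}
    (hA : ∀ (v : V) (W : Γ.Walk v v), (∀ e ∈ W.edges, e ∈ A) → ¬ Γ.IsCycle W)
    {e : E} (he : e ∈ A) : Γ.endpt e true ≠ Γ.endpt e false := by
  intro h
  have h' : Γ.endpt e true = Γ.endpt e (!true) := h
  exact hA _ (Walk.cons e true (castStart h' (Walk.nil _)))
    (by simp [he]) ⟨by simp, by simp, by simp⟩

lemma walk_of_adj {a b : V} (h : Γ.Adj a b) : Nonempty (Γ.Walk a b) := by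
  obtain ⟨e, h | h⟩ := h
  · have h1 : Γ.endpt e true = a := by simp [endpt, h]
    have h2 : Γ.endpt e false = b := by simp [endpt, h]
    subst h1; subst h2
    exact ⟨.cons e true (.nil _)⟩
  · have h1 : Γ.endpt e false = a := by simp [endpt, h]
    have h2 : Γ.endpt e true = b := by simp [endpt, h]
    subst h1; subst h2
    exact ⟨.cons e false (.nil _)⟩

lemma connected_nonempty_walk (hc : Γ.Connected) (u v : V) : Nonempty (Γ.Walk u v) := by
  have hsub : Subsingleton Γ.Components :=
    ((Nat.card_eq_one_iff_unique).1 hc).1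
  have : Γ.comp u = Γ.comp v := Subsingleton.elim _ _
  have key : ∀ a b : V, Relation.EqvGen Γ.Adj a b → Nonempty (Γ.Walk a b) := by
    intro a b h
    induction h with
    | rel a b hab => exact walk_of_adj hab
    | refl a => exact ⟨.nil a⟩
    | symm a b _ ih => exact ⟨(ih.some).reverse⟩
    | trans a b c _ _ ih1 ih2 => exact ⟨(ih1.some).append ih2.some⟩
  exact key u v (Quot.eq.1 this)

lemma cycle_of_path {e : E} {d : Bool} (p : Γ.Walk (Γ.endpt e (!d)) (Γ.endpt e d))
    (hnod : p.verts.Nodup) (hne : e ∉ p.edges) : Γ.IsCycle (Walk.cons e d p) := by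
  refine ⟨by simp, ?_, by simp [hne, nodup_edges_of_nodup_verts p hnod]⟩
  rw [cons_srcs, List.nodup_cons]
  have hv := verts_eq_srcs_concat p
  rw [hv] at hnod
  have := List.nodup_append.1 hnod
  refine ⟨fun hmem => ?_, this.1⟩
  exact this.2.2 _ hmem _ (by simp) rfl

lemma isCircuitWalk_of_basic {v : V} {W : Γ.Walk v v} (h : Γ.IsBasicCircuitWalk W) :
    Γ.IsCircuitWalk W :=
  ⟨v, W, .nil v, rfl, by rwa [append_nil]⟩

lemma edges_of_isReverseOf {u v : V} {Q : Γ.Walk v u} {P : Γ.Walk u v}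
    (h : Q.IsReverseOf P) : Q.edges = P.edges.reverse := by
  rw [edges_eq_steps_map, h, edges_eq_steps_map, ← List.map_reverse, List.map_map]
  rfl

lemma sgn_of_isReverseOf {u v : V} {Q : Γ.Walk v u} {P : Γ.Walk u v}
    (h : Q.IsReverseOf P) : Q.sgn = P.sgn := by
  rw [sgn_eq_prod, edges_of_isReverseOf h, List.map_reverse, List.prod_reverse,
    ← sgn_eq_prod]

lemma sgn_circuitWalk {v : V} {W : Γ.Walk v v} (h : Γ.IsCircuitWalk W) : W.sgn = 1 := by
  obtain ⟨u, A, B, hW, hbasic⟩ := h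
  have hAB : W.sgn = (A.append B).sgn := by
    rw [hW, sgn_append, sgn_append, mul_comm]
  rw [hAB]
  rcases hbasic with hbal | ⟨C₁, C₂, hth, hab⟩ | ⟨w, C₁, P, C₂, Q, hlh, hrev, hab⟩
  · exact hbal.2
  · rw [hab, sgn_append, hth.1.2, hth.2.1.2]; rfl
  · rw [hab, sgn_append, sgn_append, sgn_append, hlh.1.2, hlh.2.1.2,
      sgn_of_isReverseOf hrev]
    rcases Int.units_eq_one_or P.sgn with h1 | h1 <;> rw [h1] <;> rfl

end SGraph

end AuxC
section AuxD

namespace SGraph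

variable {V E : Type*} {Γ : SGraph V E} {G : Type*} [AddCommGroup G]

open Walk

lemma sgn_of_edges_nil {u v : V} (W : Γ.Walk u v) (h : W.edges = []) : W.sgn = 1 := by
  rw [sgn_eq_prod, h]; rfl

lemma exists_two_le_count_of_not_nodup {α : Type*} {l : List α} (h : ¬ l.Nodup) :
    ∃ a, 2 ≤ l.count a := by
  by_contra hcon
  push_neg at hcon
  exact h (List.nodup_iff_count_le_one.2 (fun a => by have := hcon a; omega))

lemma acyclic_engine (ω : E → Bool → ℤˣ) (hω : Γ.IsCompatible ω) (f : E → G) (A : Set E)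
    (hA : ∀ (v : V) (W : Γ.Walk v v), (∀ e ∈ W.edges, e ∈ A) → ¬ Γ.IsCycle W) :
    ∀ (n : ℕ) (v : V) (W : Γ.Walk v v), W.edges.length ≤ n →
      (∀ e ∈ W.edges, e ∈ A) → W.sgn = 1 ∧ W.tensionSum ω f = 0 := by
  intro n
  induction n with
  | zero =>
      intro v W hlen hsub
      have h0 : W.edges = [] := List.length_eq_zero_iff.1 (Nat.le_zero.1 hlen)
      exact ⟨sgn_of_edges_nil W h0,
        tensionSum_eq_zero ω f W (fun e he => absurd he (by simp [h0]))⟩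
  | succ n ih =>
      intro v W hlen hsub
      by_cases hnil : W.edges = []
      · exact ⟨sgn_of_edges_nil W hnil,
          tensionSum_eq_zero ω f W (fun e he => absurd he (by simp [hnil]))⟩
      by_cases hnod : W.srcs.Nodup
      · by_cases hed : W.edges.Nodup
        · exact absurd ⟨hnil, hnod, hed⟩ (hA v W hsub)
        -- repeated edge ⇒ backtrack removal
        obtain ⟨e, he2⟩ := exists_two_le_count_of_not_nodup hed
        have hemem : e ∈ W.edges := by rw [← List.count_pos_iff]; omega
        obtain ⟨d, W₁, W₂, heq, hni⟩ := split_edge W e hemem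
        have hcnt2 : e ∈ W₂.edges := by
          have hc0 : W₁.edges.count e = 0 := List.count_eq_zero.2 hni
          rw [heq, edges_append, cons_edges, List.count_append, hc0,
            List.count_cons_self] at he2
          rw [← List.count_pos_iff]
          omega
        obtain ⟨d', W₃, W₄, heq2, hni3⟩ := split_edge W₂ e hcnt2
        have hsrcs : W.srcs = W₁.srcs ++ Γ.endpt e d ::
            (W₃.srcs ++ Γ.endpt e d' :: W₄.srcs) := by
          rw [heq, heq2, srcs_append, cons_srcs, srcs_append, cons_srcs]
        have hnod2 := hnod
        rw [hsrcs] at hnod2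
        have hnodr : (Γ.endpt e d :: (W₃.srcs ++ Γ.endpt e d' :: W₄.srcs)).Nodup :=
          (List.nodup_append.1 hnod2).2.1
        rw [List.nodup_cons] at hnodr
        have hdd : d' = !d := by
          by_contra hne
          have hd : d' = d := by cases d <;> cases d' <;> simp_all
          subst hd
          exact hnodr.1 (by simp)
        subst hdd
        have hW30 : W₃.edges = [] := by
          by_contra h3
          have h3' := start_mem_srcs W₃ h3
          have hh := List.nodup_append.1 hnodr.2
          exact hh.2.2 _ h3' _ (by simp) rfl
        have ht3 : W₃.tensionSum ω f = 0 :=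
          tensionSum_eq_zero ω f W₃ (fun e' he' => absurd he' (by simp [hW30]))
        have hs3 : W₃.sgn = 1 := sgn_of_edges_nil W₃ hW30
        have hedges : W.edges = W₁.edges ++ e :: (W₃.edges ++ e :: W₄.edges) := by
          rw [heq, heq2, edges_append, cons_edges, edges_append, cons_edges]
        have hlens := congrArg List.length hedges
        simp [hW30] at hlens
        have hcast : Γ.endpt e (!(!d)) = Γ.endpt e d := by rw [Bool.not_not]
        set W₄' := castStart hcast W₄ with hW4'
        have hlen' : (W₁.append W₄').edges.length ≤ n := by
          rw [edges_append, List.length_append]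
          simp [hW4']
          omega
        have hsub' : ∀ e' ∈ (W₁.append W₄').edges, e' ∈ A := by
          intro e' he'
          rw [edges_append] at he'
          apply hsub
          rw [hedges]
          rcases List.mem_append.1 he' with h' | h'
          · exact List.mem_append_left _ h'
          · simp [hW4'] at h'
            simp [h']
        obtain ⟨hs', ht'⟩ := ih v (W₁.append W₄') hlen' hsub'
        have hinner_t : (Walk.cons e d (W₃.append (Walk.cons e (!d) W₄))).tensionSum ω f
            = W₄'.tensionSum ω f := by
          rw [cons_tensionSum, tensionSum_append, ht3, hs3, cons_tensionSum]
          simp only [hW4', castStart_tensionSum]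
          rcases Int.units_eq_one_or (ω e true) with o1 | o1 <;>
            rcases Int.units_eq_one_or (ω e false) with o2 | o2 <;>
              cases d <;>
                simp [hω e, o1, o2, smul_smul, smul_add] <;> abel
        have hinner_s : (Walk.cons e d (W₃.append (Walk.cons e (!d) W₄))).sgn
            = W₄'.sgn := by
          rw [cons_sgn, sgn_append, hs3, cons_sgn]
          simp only [hW4', castStart_sgn]
          rw [one_mul, ← mul_assoc, Int.units_mul_self, one_mul]
        constructor
        · rw [heq, heq2, sgn_append, hinner_s, ← sgn_append]
          exact hs'
        · rw [heq, heq2, tensionSum_append, hinner_t, ← tensionSum_append]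
          exact ht'
      · -- repeated source vertex ⇒ splice out a shorter closed walk
        obtain ⟨x, hx2⟩ := exists_two_le_count_of_not_nodup hnod
        have hxs : x ∈ W.srcs := by rw [← List.count_pos_iff]; omega
        obtain ⟨x', W₁, W₂, heq, hx', hnone⟩ :=
          split_first (· = x) W ⟨x, mem_verts_of_mem_srcs hxs, rfl⟩
        subst hx'
        have hns : W₁.srcs.count x' = 0 :=
          List.count_eq_zero.2 (fun hmem => hnone x' hmem rfl)
        have hcnt : 2 ≤ W₂.srcs.count x' := by
          rw [heq, srcs_append, List.count_append, hns] at hx2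
          omega
        cases W₂ with
        | nil => simp at hcnt
        | cons e d p =>
          rw [cons_srcs, List.count_cons_self] at hcnt
          have hmemp : Γ.endpt e d ∈ p.verts := by
            apply mem_verts_of_mem_srcs
            rw [← List.count_pos_iff]
            omega
          obtain ⟨y, p₁, p₂, heqp, hy, hnone2⟩ :=
            split_first (· = Γ.endpt e d) p ⟨_, hmemp, rfl⟩
          subst hy
          have hnp1 : p₁.srcs.count (Γ.endpt e d) = 0 :=
            List.count_eq_zero.2 (fun hmem => hnone2 _ hmem rfl)
          have hcp2 : 1 ≤ p₂.srcs.count (Γ.endpt e d) := by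
            rw [heqp, srcs_append, List.count_append, hnp1] at hcnt
            omega
          have hp2 : p₂.edges ≠ [] := by
            intro h0
            have : p₂.srcs = [] := by
              show p₂.verts.dropLast = []
              rw [verts_of_edges_nil p₂ h0]
              rfl
            rw [this] at hcp2
            simp at hcp2
          have hWeq : W = W₁.append ((Walk.cons e d p₁).append p₂) := by
            rw [heq, heqp]; rfl
          have hedges : W.edges = W₁.edges ++ (e :: p₁.edges ++ p₂.edges) := by
            rw [hWeq, edges_append, edges_append, cons_edges]
          have hlens := congrArg List.length hedges
          simp at hlens
          have hp2len : 1 ≤ p₂.edges.length := by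
            rcases Nat.eq_zero_or_pos p₂.edges.length with h0 | h0
            · exact absurd (List.length_eq_zero_iff.1 h0) hp2
            · omega
          obtain ⟨hsC, htC⟩ := ih _ (Walk.cons e d p₁)
            (by simp; omega)
            (by intro e' he'; apply hsub; rw [hedges]; simp at he' ⊢; tauto)
          obtain ⟨hsW'', htW''⟩ := ih _ (W₁.append p₂)
            (by rw [edges_append, List.length_append]; omega)
            (by intro e' he'; apply hsub; rw [hedges]; rw [edges_append] at he'
                simp at he' ⊢; tauto)
          rw [sgn_append] at hsW''
          rw [tensionSum_append] at htW''
          constructor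
          · rw [hWeq, sgn_append, sgn_append, hsC, one_mul]
            exact hsW''
          · rw [hWeq, tensionSum_append, tensionSum_append, htC, hsC]
            simpa using htW''

lemma acyclic_closed (ω : E → Bool → ℤˣ) (hω : Γ.IsCompatible ω) (f : E → G) (A : Set E)
    (hA : ∀ (v : V) (W : Γ.Walk v v), (∀ e ∈ W.edges, e ∈ A) → ¬ Γ.IsCycle W)
    (v : V) (W : Γ.Walk v v) (hsub : ∀ e ∈ W.edges, e ∈ A) :
    W.sgn = 1 ∧ W.tensionSum ω f = 0 :=
  acyclic_engine ω hω f A hA W.edges.length v W le_rfl hsub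

lemma acyclic_invariants (ω : E → Bool → ℤˣ) (hω : Γ.IsCompatible ω) (f : E → G)
    (A : Set E)
    (hA : ∀ (v : V) (W : Γ.Walk v v), (∀ e ∈ W.edges, e ∈ A) → ¬ Γ.IsCycle W)
    {u v : V} (W W' : Γ.Walk u v)
    (hsub : ∀ e ∈ W.edges, e ∈ A) (hsub' : ∀ e ∈ W'.edges, e ∈ A) :
    W.sgn = W'.sgn ∧ W.tensionSum ω f = W'.tensionSum ω f := by
  have hsubc : ∀ e ∈ (W.append W'.reverse).edges, e ∈ A := by
    intro e he
    rw [edges_append, edges_reverse] at he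
    rcases List.mem_append.1 he with h | h
    · exact hsub e h
    · exact hsub' e (List.mem_reverse.1 h)
  obtain ⟨hs, ht⟩ := acyclic_closed ω hω f A hA u (W.append W'.reverse) hsubc
  rw [sgn_append, sgn_reverse] at hs
  have hss : W.sgn = W'.sgn := by
    rcases Int.units_eq_one_or W.sgn with h | h <;>
      rcases Int.units_eq_one_or W'.sgn with h' | h' <;> simp_all
  refine ⟨hss, ?_⟩
  rw [tensionSum_append, tensionSum_reverse ω hω, hss] at ht
  rcases Int.units_eq_one_or W'.sgn with h | h <;> rw [h] at ht <;> simp at ht <;>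
    exact eq_of_sub_eq_zero (by rw [sub_eq_add_neg]; exact ht)

end SGraph

end AuxD
section AuxE

namespace SGraph

variable {V E : Type*} {Γ : SGraph V E} {G : Type*} [AddCommGroup G]

open Walk

lemma pd_isTension (ω : E → Bool → ℤˣ) (hω : Γ.IsCompatible ω) (g : V → ℤˣ → G)
    (f : E → G)
    (hPD : ∀ (e : E) (s : ℤˣ), f e = (ω e true : ℤ) • g (Γ.ends e).1 s
      + (ω e false : ℤ) • g (Γ.ends e).2 (s * Γ.sign e)) :
    Γ.IsTension ω f := by
  have hstep : ∀ (e : E) (d : Bool) (s : ℤˣ), (ω e d : ℤ) • f e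
      = g (Γ.endpt e d) s - (Γ.sign e : ℤ) • g (Γ.endpt e (!d)) (s * Γ.sign e) := by
    intro e d s
    cases d
    · have h := hPD e (s * Γ.sign e)
      rw [mul_assoc, Int.units_mul_self, mul_one] at h
      rw [h]
      show _ = g (Γ.ends e).2 s - (Γ.sign e : ℤ) • g (Γ.ends e).1 (s * Γ.sign e)
      rcases Int.units_eq_one_or (ω e true) with o1 | o1 <;>
        rcases Int.units_eq_one_or (ω e false) with o2 | o2 <;>
          simp [hω e, o1, o2, smul_add, smul_smul] <;> abel
    · have h := hPD e s
      rw [h]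
      show _ = g (Γ.ends e).1 s - (Γ.sign e : ℤ) • g (Γ.ends e).2 (s * Γ.sign e)
      rcases Int.units_eq_one_or (ω e true) with o1 | o1 <;>
        rcases Int.units_eq_one_or (ω e false) with o2 | o2 <;>
          simp [hω e, o1, o2, smul_add, smul_smul] <;> abel
  have hwalk : ∀ (u v : V) (W : Γ.Walk u v) (s : ℤˣ), W.tensionSum ω f
      = g u s - (W.sgn : ℤ) • g v (s * W.sgn) := by
    intro u v W
    induction W with
    | nil z => intro s; simp
    | cons e d p ihp =>
        intro s
        rw [cons_tensionSum, hstep e d s, ihp (s * Γ.sign e), cons_sgn]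
        rw [smul_sub, smul_smul]
        simp only [Units.val_mul, mul_assoc]
        abel
  intro v W hcw
  have h1 := hwalk v v W 1
  rw [sgn_circuitWalk hcw] at h1
  simpa using h1

lemma units_consistency (x : ℤˣ → G) (c1 c2 α β : ℤˣ) (h : c1 * c2 * (α * β) = -1) :
    (c1 : ℤ) • x ((-1) * α) + (c2 : ℤ) • x ((-1) * β)
      = (c1 : ℤ) • x α + (c2 : ℤ) • x β := by
  rcases Int.units_eq_one_or c1 with h1 | h1 <;>
    rcases Int.units_eq_one_or c2 with h2 | h2 <;>
      rcases Int.units_eq_one_or α with h3 | h3 <;>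
        rcases Int.units_eq_one_or β with h4 | h4 <;>
          subst h1 <;> subst h2 <;> subst h3 <;> subst h4 <;>
            simp_all <;> abel

end SGraph

end AuxE
section AuxF

namespace SGraph

variable {V E : Type*} {Γ : SGraph V E} {G : Type*} [AddCommGroup G]

open Walk

lemma unit_prod_key (u1 u2 sa sb σ : ℤˣ) (h : σ = -(u1 * u2)) :
    (u1 * sa) * (u2 * sb) * (sa * (σ * sb)) = -1 := by
  subst h
  rcases Int.units_eq_one_or u1 with rfl | rfl <;>
    rcases Int.units_eq_one_or u2 with rfl | rfl <;>
      rcases Int.units_eq_one_or sa with rfl | rfl <;>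
        rcases Int.units_eq_one_or sb with rfl | rfl <;> decide

/-- The double-cover potential associated to a family of tree walks. -/
def pot (ω : E → Bool → ℤˣ) (f₀ : E → G) {r : V} (Pw : ∀ v : V, Γ.Walk r v)
    (x : ℤˣ → G) (v : V) (s : ℤˣ) : G :=
  ((Pw v).sgn : ℤ) • x (s * (Pw v).sgn) - ((Pw v).sgn : ℤ) • (Pw v).tensionSum ω f₀

/-- The candidate tension extending `f₀` from a spanning tree. -/
def extTension (ω : E → Bool → ℤˣ) (f₀ : E → G) {r : V} (Pw : ∀ v : V, Γ.Walk r v)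
    (x : ℤˣ → G) : E → G := fun e =>
  (ω e true : ℤ) • pot ω f₀ Pw x (Γ.ends e).1 1
    + (ω e false : ℤ) • pot ω f₀ Pw x (Γ.ends e).2 (1 * Γ.sign e)

lemma extTension_pd (ω : E → Bool → ℤˣ) (hω : Γ.IsCompatible ω) (f₀ : E → G) {r : V}
    (Pw : ∀ v : V, Γ.Walk r v) (x : ℤˣ → G) (e : E) (s : ℤˣ) :
    extTension ω f₀ Pw x e
      = (ω e true : ℤ) • pot ω f₀ Pw x (Γ.ends e).1 s
        + (ω e false : ℤ) • pot ω f₀ Pw x (Γ.ends e).2 (s * Γ.sign e) := by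
  rcases Int.units_eq_one_or s with rfl | rfl
  · rfl
  · show (ω e true : ℤ) • pot ω f₀ Pw x (Γ.ends e).1 1
        + (ω e false : ℤ) • pot ω f₀ Pw x (Γ.ends e).2 (1 * Γ.sign e) = _
    have key := units_consistency x (ω e true * (Pw (Γ.ends e).1).sgn)
      (ω e false * (Pw (Γ.ends e).2).sgn) ((Pw (Γ.ends e).1).sgn)
      (Γ.sign e * (Pw (Γ.ends e).2).sgn)
      (unit_prod_key _ _ _ _ _ (hω e))
    simp only [pot, smul_sub, smul_smul, ← Units.val_mul]
    rw [show (1 : ℤˣ) * (Pw (Γ.ends e).1).sgn = (Pw (Γ.ends e).1).sgn from one_mul _,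
      show (1 : ℤˣ) * Γ.sign e * (Pw (Γ.ends e).2).sgn
        = Γ.sign e * (Pw (Γ.ends e).2).sgn from by rw [one_mul],
      show (-1 : ℤˣ) * Γ.sign e * (Pw (Γ.ends e).2).sgn
        = -1 * (Γ.sign e * (Pw (Γ.ends e).2).sgn) from by rw [mul_assoc]]
    rw [sub_add_sub_comm, sub_add_sub_comm, key]

lemma extTension_isTension (ω : E → Bool → ℤˣ) (hω : Γ.IsCompatible ω) (f₀ : E → G)
    {r : V} (Pw : ∀ v : V, Γ.Walk r v) (x : ℤˣ → G) :
    Γ.IsTension ω (extTension ω f₀ Pw x) :=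
  pd_isTension ω hω (pot ω f₀ Pw x) _ (fun e s => extTension_pd ω hω f₀ Pw x e s)

lemma extTension_mem (ω : E → Bool → ℤˣ) (hω : Γ.IsCompatible ω) (f₀ : E → G)
    (T : Set E)
    (hTnc : ∀ (v : V) (W : Γ.Walk v v), (∀ e ∈ W.edges, e ∈ T) → ¬ Γ.IsCycle W)
    {r : V} (Pw : ∀ v : V, Γ.Walk r v) (hPw : ∀ v, ∀ e' ∈ (Pw v).edges, e' ∈ T)
    (x : ℤˣ → G) {e : E} (he : e ∈ T) :
    extTension ω f₀ Pw x e = f₀ e := by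
  classical
  have hQsub : ∀ e' ∈ ((Pw (Γ.ends e).1).append (Walk.cons e true (Walk.nil _))).edges,
      e' ∈ T := by
    intro e' he'
    erw [edges_append] at he'
    rcases List.mem_append.1 he' with h | h
    · exact hPw _ e' h
    · change e' ∈ [e] at h
      simp at h
      rw [h]; exact he
  obtain ⟨hsgn, ht⟩ := acyclic_invariants ω hω f₀ T hTnc (Pw (Γ.ends e).2)
    ((Pw (Γ.ends e).1).append (Walk.cons e true (Walk.nil _))) (hPw _) hQsub
  erw [sgn_append, cons_sgn, nil_sgn, mul_one] at hsgn
  erw [tensionSum_append, cons_tensionSum, nil_tensionSum, smul_zero, add_zero] at ht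
  show (ω e true : ℤ) • pot ω f₀ Pw x (Γ.ends e).1 1
      + (ω e false : ℤ) • pot ω f₀ Pw x (Γ.ends e).2 (1 * Γ.sign e) = f₀ e
  simp only [pot, hsgn, ht]
  have h5 := hω e
  rcases Int.units_eq_one_or (ω e true) with o1 | o1 <;>
    rcases Int.units_eq_one_or (ω e false) with o2 | o2 <;>
      rcases Int.units_eq_one_or ((Pw (Γ.ends e).1).sgn) with o3 | o3 <;>
        · rw [o1, o2] at h5
          simp only [o1, o2, o3, h5] at *
          simp [smul_add, smul_smul, smul_sub, sub_eq_add_neg]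
          abel

end SGraph

end AuxF
section AuxG

namespace SGraph

variable {V E : Type*} {Γ : SGraph V E} {G : Type*} [AddCommGroup G]

namespace Walk

/-- Change the end point of a walk along an equality. -/
def castEnd {u v v' : V} (h : v = v') (W : Γ.Walk u v) : Γ.Walk u v' := h ▸ W

@[simp] lemma castEnd_edges {u v v' : V} (h : v = v') (W : Γ.Walk u v) :
    (castEnd h W).edges = W.edges := by subst h; rfl
@[simp] lemma castEnd_verts {u v v' : V} (h : v = v') (W : Γ.Walk u v) :
    (castEnd h W).verts = W.verts := by subst h; rfl

end Walk

open Walk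

lemma mem_srcs_of_mem_verts_closed {v : V} (W : Γ.Walk v v) (hne : W.edges ≠ [])
    {y : V} (hy : y ∈ W.verts) : y ∈ W.srcs := by
  rw [verts_eq_srcs_concat] at hy
  rcases List.mem_append.1 hy with h | h
  · exact h
  · simp at h
    rw [h]
    exact start_mem_srcs W hne

lemma rotate {v z : V} (W : Γ.Walk v v) (hz : z ∈ W.verts) :
    ∃ R : Γ.Walk z z, R.edges.Perm W.edges ∧ R.srcs.Perm W.srcs ∧ R.sgn = W.sgn := by
  obtain ⟨x, W₁, W₂, heq, hx, -⟩ := split_first (· = z) W ⟨z, hz, rfl⟩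
  subst hx
  refine ⟨W₂.append W₁, ?_, ?_, ?_⟩
  · rw [heq, edges_append, edges_append]
    exact List.perm_append_comm
  · rw [heq, srcs_append, srcs_append]
    exact List.perm_append_comm
  · rw [heq, sgn_append, sgn_append, mul_comm]

/-- If an edge of a path walk with distinct vertices has both endpoints among the
two ends of the path, then the path is that single edge. -/
lemma edges_eq_single_of_path {a b : V} (δ : Γ.Walk a b) (hnod : δ.verts.Nodup)
    {e' : E} (he' : e' ∈ δ.edges)
    (h1 : ∀ d : Bool, Γ.endpt e' d = a ∨ Γ.endpt e' d = b) : δ.edges = [e'] := by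
  obtain ⟨d', D₁, D₂, heq, -⟩ := split_edge δ e' he'
  have hverts : δ.verts = D₁.srcs ++ Γ.endpt e' d' :: D₂.verts := by
    rw [heq, verts_append, cons_verts]
  have hnod2 := hnod
  rw [hverts] at hnod2
  have hnodapp := List.nodup_append.1 hnod2
  have hnodr : (Γ.endpt e' d' :: D₂.verts).Nodup := hnodapp.2.1
  rw [List.nodup_cons] at hnodr
  have hda : Γ.endpt e' d' = a := by
    rcases h1 d' with h | h
    · exact h
    · exfalso
      have hbv : b ∈ D₂.verts := end_mem_verts D₂
      rw [h] at hnodr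
      exact hnodr.1 hbv
  have hdb : Γ.endpt e' (!d') = b := by
    rcases h1 (!d') with h | h
    · exfalso
      have hav : a ∈ D₂.verts := by
        rw [← h]
        exact start_mem_verts D₂
      have haD₁ : a ∈ D₁.verts := start_mem_verts D₁
      rw [verts_eq_srcs_concat D₁] at haD₁
      rcases List.mem_append.1 haD₁ with h2 | h2
      · exact hnodapp.2.2 _ h2 _ (by rw [hda]; simp) rfl
      · simp at h2
        rw [← hda] at hav
        exact hnodr.1 (h2 ▸ hav)
    · exact h
  have hendD₁s : Γ.endpt e' d' ∉ D₁.srcs :=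
    fun hmem => hnodapp.2.2 _ hmem _ List.mem_cons_self rfl
  have hD₁verts : D₁.verts.Nodup := by
    rw [verts_eq_srcs_concat D₁]
    rw [List.nodup_append]
    refine ⟨hnodapp.1, by simp, ?_⟩
    intro y hy z hz hy2
    simp at hz
    subst hz
    exact hendD₁s (hy2 ▸ hy)
  have hD₁ : D₁.edges = [] := by
    have := closed_nodup_trivial (castEnd hda D₁) (by simpa using hD₁verts)
    simpa using this
  have hD₂ : D₂.edges = [] := by
    have := closed_nodup_trivial (castStart hdb D₂) (by simpa using hnodr.2)
    simpa using this
  rw [heq, edges_append, cons_edges, hD₁, hD₂]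
  rfl

lemma fe_zero_of_balanced_cycle (ω : E → Bool → ℤˣ) (f : E → G)
    (hf : Γ.IsTension ω f) {v : V} (C : Γ.Walk v v)
    (hcyc : Γ.IsCycle C) (hbal : C.sgn = 1) {e : E} (hcount : C.edges.count e = 1)
    (hzero : ∀ e' ∈ C.edges, e' ≠ e → f e' = 0) : f e = 0 := by
  have h0 := hf v C (isCircuitWalk_of_basic (Or.inl ⟨hcyc, hbal⟩))
  obtain ⟨c, hc⟩ := tensionSum_single ω f e C hzero hcount
  exact (unit_smul_eq_zero_iff c _).1 (by rw [← hc, h0])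

lemma fe_zero_of_tight (ω : E → Bool → ℤˣ) (f : E → G)
    (hf : Γ.IsTension ω f) {v : V} (C₁ C₂ : Γ.Walk v v)
    (hth : Γ.IsTightHandcuff C₁ C₂) {e : E} (hcount : C₁.edges.count e = 1)
    (hz1 : ∀ e' ∈ C₁.edges, e' ≠ e → f e' = 0)
    (hz2 : ∀ e' ∈ C₂.edges, f e' = 0) : f e = 0 := by
  have h0 := hf v (C₁.append C₂)
    (isCircuitWalk_of_basic (Or.inr (Or.inl ⟨C₁, C₂, hth, rfl⟩)))
  rw [tensionSum_append, tensionSum_eq_zero ω f C₂ hz2, smul_zero, add_zero] at h0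
  obtain ⟨c, hc⟩ := tensionSum_single ω f e C₁ hz1 hcount
  exact (unit_smul_eq_zero_iff c _).1 (by rw [← hc, h0])

lemma fe_zero_of_loose (ω : E → Bool → ℤˣ) (f : E → G)
    (hf : Γ.IsTension ω f) {u w : V} (C₁ : Γ.Walk u u) (P : Γ.Walk u w)
    (C₂ : Γ.Walk w w) (hlh : Γ.IsLooseHandcuff C₁ P C₂) {e : E}
    (hcount : C₁.edges.count e = 1)
    (hz1 : ∀ e' ∈ C₁.edges, e' ≠ e → f e' = 0)
    (hzP : ∀ e' ∈ P.edges, f e' = 0)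
    (hz2 : ∀ e' ∈ C₂.edges, f e' = 0) : f e = 0 := by
  have h0 := hf u (C₁.append (P.append (C₂.append P.reverse)))
    (isCircuitWalk_of_basic (Or.inr (Or.inr
      ⟨w, C₁, P, C₂, P.reverse, hlh, isReverseOf_reverse P, rfl⟩)))
  have hzQ : ∀ e' ∈ P.reverse.edges, f e' = 0 := by
    intro e' he'
    rw [edges_reverse] at he'
    exact hzP e' (List.mem_reverse.1 he')
  rw [tensionSum_append, tensionSum_append, tensionSum_append,
    tensionSum_eq_zero ω f P hzP, tensionSum_eq_zero ω f C₂ hz2,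
    tensionSum_eq_zero ω f P.reverse hzQ] at h0
  simp at h0
  obtain ⟨c, hc⟩ := tensionSum_single ω f e C₁ hz1 hcount
  exact (unit_smul_eq_zero_iff c _).1 (by rw [← hc, h0])

end SGraph

end AuxG
section AuxH

namespace SGraph

variable {V E : Type*} {Γ : SGraph V E} {G : Type*} [AddCommGroup G]

open Walk

lemma fundamental_cycle (T : Set E) (hTc : (Γ.restrict T).Connected) {g : E}
    (hg : g ∉ T) :
    ∃ p : Γ.Walk (Γ.endpt g (!true)) (Γ.endpt g true), p.verts.Nodup ∧
      (∀ e ∈ p.edges, e ∈ T) ∧ Γ.IsCycle (Walk.cons g true p) := by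
  obtain ⟨W⟩ := connected_nonempty_walk hTc (Γ.endpt g (!true)) (Γ.endpt g true)
  obtain ⟨p, hnod, hsub⟩ := exists_path (ofRestrict W)
  have hmem : ∀ e ∈ p.edges, e ∈ T := fun e he => ofRestrict_mem W e (hsub e he)
  exact ⟨p, hnod, hmem, cycle_of_path p hnod (fun hmem' => hg (hmem g hmem'))⟩

set_option maxHeartbeats 2000000 in
lemma basis_vanishing (ω : E → Bool → ℤˣ) (hω : Γ.IsCompatible ω)
    (B : Set E) (hB : Γ.IsConnectedBasis B)
    (f : E → G) (hf : Γ.IsTension ω f) (h0 : ∀ e' ∈ B, f e' = 0) :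
    ∀ e, f e = 0 := by
  intro e
  by_cases heB : e ∈ B
  · exact h0 e heB
  rcases hB with ⟨hbal, hspan⟩ | ⟨-, T, e₀, hsT, he₀T, hBeq, hUB⟩
  · -- balanced case
    obtain ⟨p, hnod, hsub, hcyc⟩ := fundamental_cycle B hspan.1 heB
    refine fe_zero_of_balanced_cycle ω f hf _ hcyc (hbal _ _ hcyc) ?_ ?_
    · rw [cons_edges, List.count_cons_self,
        List.count_eq_zero.2 (fun hm => heB (hsub e hm))]
    · intro e' he' hne
      rcases List.mem_cons.1 he' with h | h
      · exact absurd h hne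
      · exact h0 e' (hsub e' h)
  -- unbalanced case
  have hTsubB : T ⊆ B := by rw [hBeq]; exact Set.subset_insert _ _
  have heT : e ∉ T := fun h => heB (hTsubB h)
  have hTnc := no_cycle_in_set hsT.2
  have noLoopT : ∀ {e' : E}, e' ∈ T → Γ.endpt e' true ≠ Γ.endpt e' false :=
    fun {e'} he' => no_loop_in_set hTnc he'
  obtain ⟨p, hnodp, hsubp, hcycC⟩ := fundamental_cycle T hsT.1 heT
  set C := Walk.cons e true p with hCdef
  have hCne : C.edges ≠ [] := hcycC.1
  have hCedges : C.edges = e :: p.edges := rfl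
  have hcountC : C.edges.count e = 1 := by
    rw [hCedges, List.count_cons_self,
      List.count_eq_zero.2 (fun hm => heT (hsubp e hm))]
  have hsubC : ∀ e' ∈ C.edges, e' ≠ e → e' ∈ T := by
    intro e' he' hne
    rcases List.mem_cons.1 he' with h | h
    · exact absurd h hne
    · exact hsubp e' h
  have hzC : ∀ e' ∈ C.edges, e' ≠ e → f e' = 0 :=
    fun e' he' hne => h0 e' (hTsubB (hsubC e' he' hne))
  by_cases hCsgn : C.sgn = 1
  · exact fe_zero_of_balanced_cycle ω f hf _ hcycC hCsgn hcountC hzC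
  have hCneg : C.sgn = -1 := by
    rcases Int.units_eq_one_or C.sgn with h | h
    · exact absurd h hCsgn
    · exact h
  -- the unbalanced basis cycle C₀
  have he₀B : e₀ ∈ B := by rw [hBeq]; exact Set.mem_insert _ _
  obtain ⟨q, hnodq, hsubq, hcycC₀⟩ := fundamental_cycle T hsT.1 he₀T
  set C₀ := Walk.cons e₀ true q with hC₀def
  have hC₀ne : C₀.edges ≠ [] := hcycC₀.1
  have hsubC₀B : ∀ e' ∈ C₀.edges, e' ∈ B := by
    intro e' he'
    rcases List.mem_cons.1 he' with h | h
    · rw [h]; exact he₀B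
    · exact hTsubB (hsubq e' h)
  have hC₀neg : C₀.sgn = -1 := by
    have := hUB _ (toRestrict C₀ hsubC₀B) (toRestrict_isCycle _ hsubC₀B hcycC₀)
    rwa [toRestrict_sgn] at this
  have hzC₀ : ∀ e' ∈ C₀.edges, f e' = 0 := fun e' he' => h0 e' (hsubC₀B e' he')
  have heC₀ : e ∉ C₀.edges := fun hm => heB (hsubC₀B e hm)
  by_cases hshare : ∃ z ∈ C.srcs, z ∈ C₀.srcs
  · -- SHARED CASE
    obtain ⟨z, hzCs, hzC₀s⟩ := hshare
    obtain ⟨R, hpeR, hpsR, hsgnR⟩ := rotate C (mem_verts_of_mem_srcs hzCs)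
    have hRnodE : R.edges.Nodup := (hpeR.nodup_iff).2 hcycC.2.2
    have hRnodS : R.srcs.Nodup := (hpsR.nodup_iff).2 hcycC.2.1
    have hReCount : R.edges.count e = 1 := by rw [hpeR.count_eq, hcountC]
    have heR : e ∈ R.edges := by rw [← List.count_pos_iff]; omega
    obtain ⟨d, R₁, R₂, heqR, hniR₁⟩ := split_edge R e heR
    have hniR₂ : e ∉ R₂.edges := by
      rw [heqR, edges_append, cons_edges, List.count_append, List.count_cons_self,
        List.count_eq_zero.2 hniR₁] at hReCount
      intro hm
      have := List.count_pos_iff.2 hm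
      omega
    obtain ⟨a, S₁, S₂, heqR₁, ha, htailS₂⟩ := split_last (· ∈ C₀.srcs) R₁
      ⟨z, start_mem_verts R₁, hzC₀s⟩
    obtain ⟨b, S₃, S₄, heqR₂, hb, hsrcsS₃⟩ := split_first (· ∈ C₀.srcs) R₂
      ⟨z, end_mem_verts R₂, hzC₀s⟩
    set δ := S₂.append (Walk.cons e d S₃) with hδdef
    have hδsrcs_eq : δ.srcs = S₂.srcs ++ Γ.endpt e d :: S₃.srcs := by
      rw [hδdef, srcs_append, cons_srcs]
    have hsrcsR : R.srcs
        = S₁.srcs ++ ((S₂.srcs ++ Γ.endpt e d :: S₃.srcs) ++ S₄.srcs) := by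
      rw [heqR, heqR₁, heqR₂, srcs_append, srcs_append, cons_srcs, srcs_append]
      simp [List.append_assoc]
    have hedgesR : R.edges
        = S₁.edges ++ ((S₂.edges ++ e :: S₃.edges) ++ S₄.edges) := by
      rw [heqR, heqR₁, heqR₂, edges_append, edges_append, cons_edges, edges_append]
      simp [List.append_assoc]
    have hδedges : δ.edges = S₂.edges ++ e :: S₃.edges := by
      rw [hδdef, edges_append, cons_edges]
    have hδnod : δ.srcs.Nodup := by
      rw [hδsrcs_eq]
      have h2 := hRnodS
      rw [hsrcsR] at h2
      exact h2.of_append_right.of_append_left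
    have hδnodE : δ.edges.Nodup := by
      rw [hδedges]
      have h2 := hRnodE
      rw [hedgesR] at h2
      exact h2.of_append_right.of_append_left
    have heS₂ : e ∉ S₂.edges := fun hm => hniR₁
      (by rw [heqR₁, edges_append]; exact List.mem_append_right _ hm)
    have heS₃ : e ∉ S₃.edges := fun hm => hniR₂
      (by rw [heqR₂, edges_append]; exact List.mem_append_left _ hm)
    have hδcount : δ.edges.count e = 1 := by
      rw [hδedges, List.count_append, List.count_cons_self,
        List.count_eq_zero.2 heS₂, List.count_eq_zero.2 heS₃]
    have heδ : e ∈ δ.edges := by rw [← List.count_pos_iff]; omega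
    have hδne : δ.edges ≠ [] := List.ne_nil_of_mem heδ
    have hδsubR : ∀ e' ∈ δ.edges, e' ∈ R.edges := by
      intro e' he'
      rw [hδedges] at he'
      rw [hedgesR]
      simp at he' ⊢
      tauto
    have hδsubC : ∀ e' ∈ δ.edges, e' ∈ C.edges := fun e' he' => hpeR.subset (hδsubR e' he')
    have hδT : ∀ e' ∈ δ.edges, e' ≠ e → e' ∈ T :=
      fun e' he' hne => hsubC e' (hδsubC e' he') hne
    have hδz : ∀ e' ∈ δ.edges, e' ≠ e → f e' = 0 :=
      fun e' he' hne => hzC e' (hδsubC e' he') hne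
    have hδCond : ∀ y ∈ δ.srcs, y ∈ C₀.srcs → y = a := by
      intro y hy hyC₀
      rw [hδsrcs_eq] at hy
      rcases List.mem_append.1 hy with h | h
      · have h2 : y ∈ S₂.verts := mem_verts_of_mem_srcs h
        rw [verts_head S₂] at h2
        rcases List.mem_cons.1 h2 with h3 | h3
        · exact h3
        · exact absurd hyC₀ (htailS₂ y h3)
      rcases List.mem_cons.1 h with h3 | h3
      · subst h3
        have h2 : Γ.endpt e d ∈ S₂.verts := end_mem_verts S₂
        rw [verts_head S₂] at h2
        rcases List.mem_cons.1 h2 with h4 | h4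
        · exact h4
        · exact absurd hyC₀ (htailS₂ _ h4)
      · exact absurd hyC₀ (hsrcsS₃ y h3)
    by_cases hab : a = b
    · subst hab
      have hcycδ : Γ.IsCycle δ := ⟨hδne, hδnod, hδnodE⟩
      by_cases hδsgn : δ.sgn = 1
      · exact fe_zero_of_balanced_cycle ω f hf _ hcycδ hδsgn hδcount hδz
      have hδneg : δ.sgn = -1 := by
        rcases Int.units_eq_one_or δ.sgn with h | h
        · exact absurd h hδsgn
        · exact h
      obtain ⟨C₂, hpe2, hps2, hsn2⟩ := rotate C₀ (mem_verts_of_mem_srcs ha)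
      have hcyc2 : Γ.IsCycle C₂ := by
        refine ⟨?_, (hps2.nodup_iff).2 hcycC₀.2.1, (hpe2.nodup_iff).2 hcycC₀.2.2⟩
        intro h
        exact hC₀ne ((h ▸ hpe2).symm.eq_nil)
      have hth : Γ.IsTightHandcuff δ C₂ := by
        refine ⟨⟨hcycδ, hδneg⟩, ⟨hcyc2, by rw [hsn2]; exact hC₀neg⟩, ?_, ?_⟩
        · intro x hx hx2
          exact hδCond x hx (hps2.subset hx2)
        · intro e' he' he2'
          have he2C₀ : e' ∈ C₀.edges := hpe2.subset he2'
          have hne : e' ≠ e := fun h => heC₀ (h ▸ he2C₀)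
          have he'T : e' ∈ T := hδT e' he' hne
          have hend : ∀ dd : Bool, Γ.endpt e' dd = a := by
            intro dd
            have h1 : Γ.endpt e' dd ∈ δ.verts := mem_verts_of_mem_edges δ he' dd
            have h2 : Γ.endpt e' dd ∈ C₀.srcs := mem_srcs_of_mem_verts_closed C₀
              hC₀ne (mem_verts_of_mem_edges C₀ he2C₀ dd)
            rw [verts_eq_srcs_concat] at h1
            rcases List.mem_append.1 h1 with h3 | h3
            · exact hδCond _ h3 h2
            · simpa using h3
          exact noLoopT he'T (by rw [hend true, hend false])
      exact fe_zero_of_tight ω f hf δ C₂ hth hδcount hδz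
        (fun e' he2 => hzC₀ e' (hpe2.subset he2))
    · -- a ≠ b : splice a balanced cycle through e
      have hbδ : b ∉ δ.srcs := fun hmem => hab (hδCond b hmem hb).symm
      have hδvertsnod : δ.verts.Nodup := by
        rw [verts_eq_srcs_concat, List.nodup_append]
        refine ⟨hδnod, by simp, ?_⟩
        intro y hy z hz hyz
        simp at hz
        subst hz
        subst hyz
        exact hbδ hy
      obtain ⟨R₀, hpe0, hps0, hsn0⟩ := rotate C₀ (mem_verts_of_mem_srcs ha)
      have hR₀nodE : R₀.edges.Nodup := (hpe0.nodup_iff).2 hcycC₀.2.2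
      have hR₀nodS : R₀.srcs.Nodup := (hps0.nodup_iff).2 hcycC₀.2.1
      have hR₀ne : R₀.edges ≠ [] := fun h2 => hC₀ne ((h2 ▸ hpe0).symm.eq_nil)
      have hbR₀ : b ∈ R₀.srcs := hps0.symm.subset hb
      obtain ⟨b2, F₁, F₂, heqF, hb2, hnF1⟩ := split_first (· = b) R₀
        ⟨b, mem_verts_of_mem_srcs hbR₀, rfl⟩
      subst hb2
      have hsgnF : F₁.sgn * F₂.sgn = -1 := by
        have h2 := hsn0
        rw [heqF, sgn_append] at h2
        rw [h2]; exact hC₀neg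
      have hF₁ne : F₁.edges ≠ [] := by
        intro h
        have h2 : b2 ∈ F₁.verts := end_mem_verts F₁
        rw [verts_of_edges_nil F₁ h] at h2
        simp at h2
        exact hab h2.symm
      have hsrcsR₀ : R₀.srcs = F₁.srcs ++ F₂.srcs := by rw [heqF, srcs_append]
      have hedgesR₀ : R₀.edges = F₁.edges ++ F₂.edges := by rw [heqF, edges_append]
      have haF₂ : a ∉ F₂.srcs := by
        have h2 := hR₀nodS
        rw [hsrcsR₀, List.nodup_append] at h2
        exact fun hmem => h2.2.2 _ (start_mem_srcs F₁ hF₁ne) _ hmem rfl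
      have hC₀closedv : ∀ y ∈ R₀.verts, y ∈ C₀.srcs := by
        intro y hy
        exact hps0.subset (mem_srcs_of_mem_verts_closed R₀ hR₀ne hy)
      obtain ⟨γ, hγsgn, hγsnod, hγssub, hγa, hγesub, hγenod⟩ :
          ∃ γ : Γ.Walk b2 a, δ.sgn * γ.sgn = 1 ∧ γ.srcs.Nodup ∧
            (∀ y ∈ γ.srcs, y ∈ C₀.srcs) ∧ a ∉ γ.srcs ∧
            (∀ e' ∈ γ.edges, e' ∈ C₀.edges) ∧ γ.edges.Nodup := by
        by_cases hc : δ.sgn * F₂.sgn = 1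
        · refine ⟨F₂, hc, ?_, ?_, haF₂, ?_, ?_⟩
          · have h2 := hR₀nodS; rw [hsrcsR₀] at h2; exact h2.of_append_right
          · intro y hy
            exact hps0.subset (by rw [hsrcsR₀]; exact List.mem_append_right _ hy)
          · intro e' he'
            exact hpe0.subset (by rw [hedgesR₀]; exact List.mem_append_right _ he')
          · have h2 := hR₀nodE; rw [hedgesR₀] at h2; exact h2.of_append_right
        · have hγsg : δ.sgn * F₁.sgn = 1 := by
            rcases Int.units_eq_one_or δ.sgn with h1 | h1 <;>
              rcases Int.units_eq_one_or F₁.sgn with h2 | h2 <;>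
                rcases Int.units_eq_one_or F₂.sgn with h3 | h3 <;> simp_all
          have hF₁snod : F₁.srcs.Nodup := by
            rw [hsrcsR₀] at hR₀nodS; exact hR₀nodS.of_append_left
          have hvF₁nod : F₁.verts.Nodup := by
            rw [verts_eq_srcs_concat, List.nodup_append]
            refine ⟨hF₁snod, by simp, ?_⟩
            intro y hy z hz hyz
            simp at hz
            subst hz
            subst hyz
            exact (hnF1 y hy) rfl
          have hsrcsrev : F₁.reverse.srcs = F₁.verts.tail.reverse := by
            show (F₁.reverse.verts).dropLast = _
            rw [verts_reverse, verts_head F₁, List.reverse_cons, List.dropLast_concat]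
            rfl
          have htailnod : F₁.verts.tail.Nodup := by
            have h2 := hvF₁nod
            rw [verts_head F₁, List.nodup_cons] at h2
            exact h2.2
          refine ⟨F₁.reverse, by rw [sgn_reverse]; exact hγsg, ?_, ?_, ?_, ?_, ?_⟩
          · rw [hsrcsrev]
            exact List.nodup_reverse.2 htailnod
          · intro y hy
            rw [hsrcsrev] at hy
            have h2 : y ∈ F₁.verts := by
              rw [verts_head F₁]
              exact List.mem_cons_of_mem _ (List.mem_reverse.1 hy)
            apply hC₀closedv
            rw [heqF, verts_append]
            rw [verts_eq_srcs_concat F₁] at h2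
            rcases List.mem_append.1 h2 with h3 | h3
            · exact List.mem_append_left _ h3
            · simp at h3
              subst h3
              exact List.mem_append_right _ (start_mem_verts F₂)
          · rw [hsrcsrev]
            intro hmem
            have h2 : a ∈ F₁.verts.tail := List.mem_reverse.1 hmem
            have h3 := hvF₁nod
            rw [verts_head F₁, List.nodup_cons] at h3
            exact h3.1 h2
          · intro e' he'
            rw [edges_reverse] at he'
            exact hpe0.subset
              (by rw [hedgesR₀]; exact List.mem_append_left _ (List.mem_reverse.1 he'))
          · rw [edges_reverse]
            refine List.nodup_reverse.2 ?_
            rw [hedgesR₀] at hR₀nodE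
            exact hR₀nodE.of_append_left
      have hDcyc : Γ.IsCycle (δ.append γ) := by
        refine ⟨?_, ?_, ?_⟩
        · rw [edges_append]
          intro h
          exact hδne (List.append_eq_nil_iff.1 h).1
        · rw [srcs_append, List.nodup_append]
          refine ⟨hδnod, hγsnod, ?_⟩
          intro y hy z hy2 hyz
          subst hyz
          have h3 := hδCond y hy (hγssub y hy2)
          subst h3
          exact hγa hy2
        · rw [edges_append, List.nodup_append]
          refine ⟨hδnodE, hγenod, ?_⟩
          intro e' he' e'' he2' hee
          subst hee
          have he2C₀ : e' ∈ C₀.edges := hγesub e' he2'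
          have hne : e' ≠ e := fun h => heC₀ (h ▸ he2C₀)
          have hend : ∀ dd : Bool, Γ.endpt e' dd = a ∨ Γ.endpt e' dd = b2 := by
            intro dd
            have h1 : Γ.endpt e' dd ∈ δ.verts := mem_verts_of_mem_edges δ he' dd
            have h2 : Γ.endpt e' dd ∈ C₀.srcs := mem_srcs_of_mem_verts_closed C₀
              hC₀ne (mem_verts_of_mem_edges C₀ he2C₀ dd)
            rw [verts_eq_srcs_concat] at h1
            rcases List.mem_append.1 h1 with h3 | h3
            · exact Or.inl (hδCond _ h3 h2)
            · right; simpa using h3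
          have hsingle := edges_eq_single_of_path δ hδvertsnod he' hend
          rw [hsingle] at heδ
          simp at heδ
          exact hne heδ.symm
      have hDsgn : (δ.append γ).sgn = 1 := by rw [sgn_append]; exact hγsgn
      have hDcount : (δ.append γ).edges.count e = 1 := by
        rw [edges_append, List.count_append, hδcount,
          List.count_eq_zero.2 (fun hm => heC₀ (hγesub e hm))]
      refine fe_zero_of_balanced_cycle ω f hf _ hDcyc hDsgn hDcount ?_
      intro e' he' hne
      rw [edges_append] at he'
      rcases List.mem_append.1 he' with h | h
      · exact hδz e' h hne
      · exact hzC₀ e' (hγesub e' h)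
  · -- DISJOINT CASE : loose handcuff
    push_neg at hshare
    obtain ⟨Wr⟩ := connected_nonempty_walk hsT.1 (Γ.endpt e true) (Γ.endpt e₀ true)
    obtain ⟨m, hnodm, hsubm'⟩ := exists_path (ofRestrict Wr)
    have hsubm : ∀ e' ∈ m.edges, e' ∈ T := fun e' h => ofRestrict_mem Wr e' (hsubm' e' h)
    obtain ⟨a', m₁, m₂, heqm, ha', htail⟩ := split_last (· ∈ C.srcs) m
      ⟨_, start_mem_verts m, start_mem_srcs C hCne⟩
    obtain ⟨w', P, m₄, heqm2, hw', hPsrcs⟩ := split_first (· ∈ C₀.srcs) m₂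
      ⟨_, end_mem_verts m₂, start_mem_srcs C₀ hC₀ne⟩
    have hm₂nod : m₂.verts.Nodup := by
      have h2 := hnodm
      rw [heqm, verts_append] at h2
      exact h2.of_append_right
    have hm₂verts : m₂.verts = P.srcs ++ m₄.verts := by rw [heqm2, verts_append]
    have hPverts_sub : ∀ y ∈ P.verts, y ∈ m₂.verts := by
      intro y hy
      rw [hm₂verts]
      rw [verts_eq_srcs_concat P] at hy
      rcases List.mem_append.1 hy with h | h
      · exact List.mem_append_left _ h
      · simp at h
        rw [h]
        exact List.mem_append_right _ (start_mem_verts m₄)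
    have hPnod : P.verts.Nodup := by
      rw [hm₂verts] at hm₂nod
      have happ := List.nodup_append.1 hm₂nod
      rw [verts_eq_srcs_concat P, List.nodup_append]
      refine ⟨happ.1, by simp, ?_⟩
      intro y hy z hz hyz
      simp at hz
      subst hz
      subst hyz
      exact happ.2.2 _ hy _ (start_mem_verts m₄) rfl
    have hPC : ∀ y ∈ P.verts, y ∈ C.srcs → y = a' := by
      intro y hy hyC
      have hym₂ : y ∈ m₂.verts := hPverts_sub y hy
      rw [verts_head m₂] at hym₂
      rcases List.mem_cons.1 hym₂ with h | h
      · exact h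
      · exact absurd hyC (htail y h)
    have hPC₀ : ∀ y ∈ P.verts, y ∈ C₀.srcs → y = w' := by
      intro y hy hyC₀
      rw [verts_eq_srcs_concat P] at hy
      rcases List.mem_append.1 hy with h | h
      · exact absurd hyC₀ (hPsrcs y h)
      · simpa using h
    have haw : a' ≠ w' := fun h => hshare a' ha' (h ▸ hw')
    have hPne : P.edges ≠ [] := by
      intro h
      have h2 : w' ∈ P.verts := end_mem_verts P
      rw [verts_of_edges_nil P h] at h2
      simp at h2
      exact haw h2.symm
    have hPsubT : ∀ e' ∈ P.edges, e' ∈ T := by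
      intro e' h
      apply hsubm
      rw [heqm, heqm2, edges_append, edges_append]
      exact List.mem_append_right _ (List.mem_append_left _ h)
    have hPCedge : ∀ e' ∈ P.edges, e' ∉ C.edges := by
      intro e' he'P he'C
      have hend1 : ∀ dd : Bool, Γ.endpt e' dd = a' := by
        intro dd
        exact hPC _ (mem_verts_of_mem_edges P he'P dd)
          (mem_srcs_of_mem_verts_closed C hCne (mem_verts_of_mem_edges C he'C dd))
      exact noLoopT (hPsubT e' he'P) (by rw [hend1 true, hend1 false])
    have hPC₀edge : ∀ e' ∈ P.edges, e' ∉ C₀.edges := by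
      intro e' he'P he'C₀
      have hend1 : ∀ dd : Bool, Γ.endpt e' dd = w' := by
        intro dd
        exact hPC₀ _ (mem_verts_of_mem_edges P he'P dd)
          (mem_srcs_of_mem_verts_closed C₀ hC₀ne (mem_verts_of_mem_edges C₀ he'C₀ dd))
      exact noLoopT (hPsubT e' he'P) (by rw [hend1 true, hend1 false])
    obtain ⟨C₁, hperm1e, hperm1s, hsgn1⟩ := rotate C (mem_verts_of_mem_srcs ha')
    obtain ⟨C₂, hperm2e, hperm2s, hsgn2⟩ := rotate C₀ (mem_verts_of_mem_srcs hw')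
    have hcyc1 : Γ.IsCycle C₁ := by
      refine ⟨?_, (hperm1s.nodup_iff).2 hcycC.2.1, (hperm1e.nodup_iff).2 hcycC.2.2⟩
      intro h
      exact hCne ((h ▸ hperm1e).symm.eq_nil)
    have hcyc2 : Γ.IsCycle C₂ := by
      refine ⟨?_, (hperm2s.nodup_iff).2 hcycC₀.2.1, (hperm2e.nodup_iff).2 hcycC₀.2.2⟩
      intro h
      exact hC₀ne ((h ▸ hperm2e).symm.eq_nil)
    have hlh : Γ.IsLooseHandcuff C₁ P C₂ := by
      refine ⟨⟨hcyc1, by rw [hsgn1]; exact hCneg⟩, ⟨hcyc2, by rw [hsgn2]; exact hC₀neg⟩,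
        ⟨hPne, hPnod⟩, ?_, ?_, ?_, ?_⟩
      · intro x hx hx2
        exact hshare x (hperm1s.subset hx) (hperm2s.subset hx2)
      · intro x hx hx1
        exact hPC x hx (hperm1s.subset hx1)
      · intro x hx hx2
        exact hPC₀ x hx (hperm2s.subset hx2)
      · intro e' he'
        exact ⟨fun h => hPCedge e' he' (hperm1e.subset h),
          fun h => hPC₀edge e' he' (hperm2e.subset h)⟩
    refine fe_zero_of_loose ω f hf C₁ P C₂ hlh ?_ ?_ ?_ ?_
    · rw [hperm1e.count_eq, hcountC]
    · intro e' he' hne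
      exact hzC e' (hperm1e.subset he') hne
    · intro e' he'
      exact h0 e' (hTsubB (hPsubT e' he'))
    · intro e' he'
      exact hzC₀ e' (hperm2e.subset he')

end SGraph

end AuxH
section Statement

open SGraph

/-- Lemma 7.9: a `G`-tension of a connected signed graph is uniquely determined
by its values on a connected basis; indeed restriction to the basis is a
bijection onto all `G`-valued functions on the basis. -/
theorem tension_restriction_to_connected_basis_bijective
    (V E : Type) [Finite V] [Finite E]
    (Γ : SGraph V E) (hconn : Γ.Connected)
    (ω : E → Bool → ℤˣ) (hω : Γ.IsCompatible ω)
    (G : Type) [AddCommGroup G] [Finite G]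
    (B : Set E) (hB : Γ.IsConnectedBasis B) :
    Function.Bijective
      (fun f : {f : E → G // Γ.IsTension ω f} => fun b : B => (f : E → G) b) := by
  classical
  constructor
  · -- injectivity
    rintro ⟨f₁, hf₁⟩ ⟨f₂, hf₂⟩ heq
    simp only at heq
    refine Subtype.ext (funext fun e => ?_)
    have hsub : Γ.IsTension ω (f₁ - f₂) := by
      intro v W hcw
      rw [Walk.tensionSum_sub, hf₁ v W hcw, hf₂ v W hcw, sub_zero]
    have h0 : ∀ e' ∈ B, (f₁ - f₂) e' = 0 := by
      intro e' he'
      have h2 := congrFun heq ⟨e', he'⟩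
      simp only [Pi.sub_apply]
      rw [sub_eq_zero]
      exact h2
    have h3 := basis_vanishing ω hω B hB (f₁ - f₂) hsub h0 e
    rw [Pi.sub_apply, sub_eq_zero] at h3
    exact h3
  · -- surjectivity
    intro hbar
    set f₀ : E → G := fun e' => if he' : e' ∈ B then hbar ⟨e', he'⟩ else 0 with hf₀
    have hf₀B : ∀ (e' : E) (he' : e' ∈ B), f₀ e' = hbar ⟨e', he'⟩ := by
      intro e' he'
      simp [hf₀, he']
    rcases hB with ⟨hbal, hspan⟩ | ⟨hnb, T, e₀, hsT, he₀T, hBeq, hUB⟩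
    · -- balanced case : B is a spanning tree
      have hTnc := no_cycle_in_set hspan.2
      obtain ⟨r⟩ : Nonempty V := by
        have h1 : Nonempty Γ.Components := ((Nat.card_eq_one_iff_unique).1 hconn).2
        obtain ⟨c⟩ := h1
        obtain ⟨v, -⟩ := Quot.exists_rep c
        exact ⟨v⟩
      have hPex : ∀ v : V, ∃ W : Γ.Walk r v, ∀ e' ∈ W.edges, e' ∈ B := by
        intro v
        obtain ⟨W⟩ := connected_nonempty_walk hspan.1 r v
        exact ⟨Walk.ofRestrict W, Walk.ofRestrict_mem W⟩
      choose Pw hPw using hPex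
      refine ⟨⟨extTension ω f₀ Pw (fun _ => 0),
        extTension_isTension ω hω f₀ Pw _⟩, ?_⟩
      funext b
      show extTension ω f₀ Pw (fun _ => 0) b = hbar b
      rw [extTension_mem ω hω f₀ B hTnc Pw hPw (fun _ => 0) b.2, hf₀B b b.2]
    · -- unbalanced case : B = T ∪ {e₀}
      have hTnc := no_cycle_in_set hsT.2
      have hTsubB : T ⊆ B := by rw [hBeq]; exact Set.subset_insert _ _
      set r := Γ.endpt e₀ true with hr
      have hPex : ∀ v : V, ∃ W : Γ.Walk r v, ∀ e' ∈ W.edges, e' ∈ T := by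
        intro v
        obtain ⟨W⟩ := connected_nonempty_walk hsT.1 r v
        exact ⟨Walk.ofRestrict W, Walk.ofRestrict_mem W⟩
      choose Pw hPw using hPex
      have hroot : (Pw r).sgn = 1 ∧ (Pw r).tensionSum ω f₀ = 0 := by
        have h2 := acyclic_invariants ω hω f₀ T hTnc (Pw r) (Walk.nil r)
          (hPw r) (by simp)
        simpa using h2
      set sb := (Pw (Γ.endpt e₀ false)).sgn with hsb
      set tb := (Pw (Γ.endpt e₀ false)).tensionSum ω f₀ with htb
      have hkey : Γ.sign e₀ * sb = -1 := by
        obtain ⟨pp, hnodpp, hsubpp⟩ := Walk.exists_path (Pw (Γ.endpt e₀ false)).reverse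
        have hsubT : ∀ e' ∈ pp.edges, e' ∈ T := by
          intro e' h
          have h2 := hsubpp e' h
          rw [Walk.edges_reverse] at h2
          exact hPw _ e' (List.mem_reverse.1 h2)
        have hC₀cyc : Γ.IsCycle (Walk.cons e₀ true pp) :=
          cycle_of_path (e := e₀) (d := true) pp hnodpp (fun hm => he₀T (hsubT e₀ hm))
        have hsubB : ∀ e' ∈ (Walk.cons e₀ true pp).edges, e' ∈ B := by
          intro e' h
          rcases List.mem_cons.1 h with h | h
          · rw [h, hBeq]; exact Set.mem_insert _ _
          · exact hTsubB (hsubT e' h)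
        have hsgnm1 := hUB _ (Walk.toRestrict _ hsubB)
          (Walk.toRestrict_isCycle _ hsubB hC₀cyc)
        rw [Walk.toRestrict_sgn, Walk.cons_sgn] at hsgnm1
        have hppsgn : pp.sgn = sb := by
          have h2 := (acyclic_invariants ω hω f₀ T hTnc pp
            ((Pw (Γ.endpt e₀ false)).reverse) hsubT
            (by intro e' h; rw [Walk.edges_reverse] at h
                exact hPw _ e' (List.mem_reverse.1 h))).1
          rwa [Walk.sgn_reverse] at h2
        rw [← hppsgn]
        exact hsgnm1
      set K := f₀ e₀ + ((ω e₀ false * sb : ℤˣ) : ℤ) • tb with hK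
      set x : ℤˣ → G := fun s => if s = 1 then ((ω e₀ true : ℤ)) • K else 0 with hx
      have hcalc : extTension ω f₀ Pw x e₀ = f₀ e₀ := by
        show (ω e₀ true : ℤ) • pot ω f₀ Pw x (Γ.ends e₀).1 1
            + (ω e₀ false : ℤ) • pot ω f₀ Pw x (Γ.ends e₀).2 (1 * Γ.sign e₀) = f₀ e₀
        have hpat : pot ω f₀ Pw x (Γ.ends e₀).1 1 = (ω e₀ true : ℤ) • K := by
          show pot ω f₀ Pw x r 1 = _
          rw [pot, hroot.1, hroot.2]
          simp [hx]
        have hpbt : pot ω f₀ Pw x (Γ.ends e₀).2 (1 * Γ.sign e₀)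
            = - ((sb : ℤ) • tb) := by
          show pot ω f₀ Pw x (Γ.endpt e₀ false) (1 * Γ.sign e₀) = _
          rw [pot, ← hsb, ← htb, one_mul, hkey]
          rw [hx]
          simp only []
          rw [if_neg (by decide)]
          simp
        rw [hpat, hpbt, hK]
        rcases Int.units_eq_one_or (ω e₀ true) with o1 | o1 <;>
          rcases Int.units_eq_one_or (ω e₀ false) with o2 | o2 <;>
            rcases Int.units_eq_one_or sb with o3 | o3 <;>
              simp [o1, o2, o3, smul_add, smul_smul] <;> abel
      refine ⟨⟨extTension ω f₀ Pw x, extTension_isTension ω hω f₀ Pw x⟩, ?_⟩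
      funext b
      obtain ⟨bv, hbv⟩ := b
      show extTension ω f₀ Pw x bv = hbar ⟨bv, hbv⟩
      by_cases hbT : bv ∈ T
      · rw [extTension_mem ω hω f₀ T hTnc Pw hPw x hbT]
        exact hf₀B bv hbv
      · have hbe₀ : bv = e₀ := by
          have h2 := hbv
          rw [hBeq] at h2
          rcases Set.mem_insert_iff.1 h2 with h | h
          · exact h
          · exact absurd h hbT
        subst hbe₀
        rw [hcalc]
        exact hf₀B bv hbv

end Statement
end

section
/- Let M₁=(E,r₁) and M₂=(E,r₂) be matroids on a common finite ground set E, with duals M₁*=(E,r₁*) and M₂*=(E,r₂*). Then, as an identity of field-valued functions, for all X, Y, Z with X ≠ 1, Y ≠ 1 and Z ≠ 1: S_{M₁*,M₂*}(X, Y, Z) = (X−1)^{−r₁(E)} · (Y−1)^{r₂(E)} · (Z−1)^{|E|−r₁(E)−r₂(E)} · S_{M₁,M₂}(Y, X, 1 + (X−1)(Z−1)/(Y−1)). -/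
noncomputable section Matroids

/-- A matroid on a finite ground set `E`, presented by its rank function. -/
structure RankMatroid (E : Type*) [Fintype E] [DecidableEq E] where
  r : Finset E → ℕ
  rank_le_card : ∀ A : Finset E, r A ≤ A.card
  rank_mono : ∀ ⦃A B : Finset E⦄, A ⊆ B → r A ≤ r B
  rank_submodular : ∀ A B : Finset E, r (A ∪ B) + r (A ∩ B) ≤ r A + r B

/-- The rank function of the dual matroid: `r*(A) = r(Aᶜ) + |A| − r(E)`. -/
def RankMatroid.dualRank {E : Type*} [Fintype E] [DecidableEq E] (M : RankMatroid E) :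
    Finset E → ℕ :=
  fun A => (M.r Aᶜ + A.card) - M.r Finset.univ

/-- The Tutte polynomial of a rank function:
`T(X,Y) = Σ_{A⊆E} (X−1)^{r(E)−r(A)} (Y−1)^{|A|−r(A)}`. -/
def tutteFn {E : Type*} [Fintype E] {K : Type*} [Field K]
    (r : Finset E → ℕ) (x y : K) : K :=
  ∑ A : Finset E, (x - 1) ^ (r Finset.univ - r A) * (y - 1) ^ (A.card - r A)

/-- The joint Tutte polynomial of an ordered pair of rank functions on a common
ground set: `S(X,Y,Z) = Σ_{A⊆E} (X−1)^{r₁(E)−r₁(A)} (Y−1)^{|A|−r₂(A)}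
(Z−1)^{r₂(A)+r₁(E)−r₁(A)}`. -/
def jointTutteFn {E : Type*} [Fintype E] {K : Type*} [Field K]
    (r₁ r₂ : Finset E → ℕ) (x y z : K) : K :=
  ∑ A : Finset E,
    (x - 1) ^ (r₁ Finset.univ - r₁ A) * (y - 1) ^ (A.card - r₂ A) *
      (z - 1) ^ ((r₂ A + r₁ Finset.univ) - r₁ A)

end Matroids

section Statement

lemma RankMatroid.rank_empty {E : Type*} [Fintype E] [DecidableEq E] (M : RankMatroid E) :
    M.r ∅ = 0 :=
  Nat.le_zero.mp (by simpa using M.rank_le_card ∅)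

lemma RankMatroid.rank_univ_le {E : Type*} [Fintype E] [DecidableEq E] (M : RankMatroid E)
    (A : Finset E) : M.r Finset.univ ≤ M.r Aᶜ + A.card := by
  have h := M.rank_submodular A Aᶜ
  simp [Finset.union_compl, Finset.inter_compl, M.rank_empty] at h
  have h2 := M.rank_le_card A
  omega

lemma RankMatroid.dual_cast {E : Type*} [Fintype E] [DecidableEq E] (M : RankMatroid E)
    (A : Finset E) : (M.dualRank A : ℤ) = M.r Aᶜ + A.card - M.r Finset.univ := by
  have h := M.rank_univ_le A
  simp only [RankMatroid.dualRank]
  omega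

lemma RankMatroid.dual_cast_univ {E : Type*} [Fintype E] [DecidableEq E] (M : RankMatroid E) :
    (M.dualRank (Finset.univ : Finset E) : ℤ) = Fintype.card E - M.r Finset.univ := by
  rw [M.dual_cast]
  simp [M.rank_empty, Finset.card_univ]

lemma npow_sub_eq {K : Type*} [Field K] (u : K) {a b : ℕ} (h : b ≤ a) :
    u ^ (a - b) = u ^ ((a : ℤ) - (b : ℤ)) := by
  rw [← Nat.cast_sub h, zpow_natCast]

lemma prod_zpow_helper {K : Type*} [Field K] {a b c : K} (ha : a ≠ 0) (hb : b ≠ 0) (hc : c ≠ 0)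
    (p1 p2 p3 q1 q2 q3 s1 s2 : ℤ) :
    (a ^ p1 * b ^ q1 * c ^ s1) * (b ^ q2 * a ^ p2 * (a ^ p3 * c ^ s2 * b ^ q3)) =
      a ^ (p1 + p2 + p3) * b ^ (q1 + q2 + q3) * c ^ (s1 + s2) := by
  rw [zpow_add₀ ha, zpow_add₀ ha, zpow_add₀ hb, zpow_add₀ hb, zpow_add₀ hc]
  ring

/-- Proposition 3.2, second duality formula:
`S_{M₁*,M₂*}(X,Y,Z) = (X−1)^{−r₁(E)} (Y−1)^{r₂(E)} (Z−1)^{|E|−r₁(E)−r₂(E)}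
· S_{M₁,M₂}(Y, X, 1 + (X−1)(Z−1)/(Y−1))`. -/
theorem jointTutte_duality_two (E : Type) [Fintype E] [DecidableEq E]
    (K : Type) [Field K] (M₁ M₂ : RankMatroid E)
    (x y z : K) (hx : x ≠ 1) (hy : y ≠ 1) (hz : z ≠ 1) :
    jointTutteFn M₁.dualRank M₂.dualRank x y z =
      ((x - 1) ^ (M₁.r Finset.univ))⁻¹ * (y - 1) ^ (M₂.r Finset.univ) *
        (z - 1) ^ ((Fintype.card E : ℤ) - M₁.r Finset.univ - M₂.r Finset.univ) *
          jointTutteFn M₁.r M₂.r y x (1 + (x - 1) * (z - 1) / (y - 1)) := by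
  have hx' : x - 1 ≠ 0 := sub_ne_zero.mpr hx
  have hy' : y - 1 ≠ 0 := sub_ne_zero.mpr hy
  have hz' : z - 1 ≠ 0 := sub_ne_zero.mpr hz
  rw [jointTutteFn, jointTutteFn, Finset.mul_sum]
  refine Fintype.sum_equiv ⟨compl, compl, compl_compl, compl_compl⟩ _ _ (fun A => ?_)
  simp only [Equiv.coe_fn_mk]
  -- basic facts
  have hc1 : Aᶜ.card + A.card = Fintype.card E := by
    have := Finset.card_le_univ A
    rw [Finset.card_compl]; omega
  have dc1 := M₁.dual_cast A
  have dc2 := M₂.dual_cast A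
  have dc3 := M₁.dual_cast_univ (E := E)
  have dc4 := M₂.dual_cast_univ (E := E)
  have hm1 : M₁.r Aᶜ ≤ M₁.r Finset.univ := M₁.rank_mono (Finset.subset_univ _)
  have hm2 : M₂.r Aᶜ ≤ M₂.r Finset.univ := M₂.rank_mono (Finset.subset_univ _)
  have hl1 : M₁.r Aᶜ ≤ Aᶜ.card := M₁.rank_le_card Aᶜ
  have hl2 : M₂.r Aᶜ ≤ Aᶜ.card := M₂.rank_le_card Aᶜ
  have h1 : M₁.dualRank A ≤ M₁.dualRank Finset.univ := by omega
  have h2 : M₂.dualRank A ≤ A.card := by omega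
  have h3 : M₁.dualRank A ≤ M₂.dualRank A + M₁.dualRank Finset.univ := by omega
  have h4 : M₁.r Aᶜ ≤ M₁.r Finset.univ := hm1
  have h6 : M₁.r Aᶜ ≤ M₂.r Aᶜ + M₁.r Finset.univ := by omega
  have hw : (1 : K) + (x - 1) * (z - 1) / (y - 1) - 1 = (x - 1) * (z - 1) / (y - 1) := by
    ring
  rw [hw, npow_sub_eq _ h1, npow_sub_eq _ h2, npow_sub_eq _ h3, npow_sub_eq _ h4,
    npow_sub_eq _ hl2, npow_sub_eq _ h6,
    ← zpow_natCast (x - 1) (M₁.r Finset.univ), ← zpow_neg,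
    ← zpow_natCast (y - 1) (M₂.r Finset.univ),
    div_zpow, mul_zpow, div_eq_mul_inv, ← zpow_neg,
    prod_zpow_helper hx' hy' hz']
  congr 1
  · congr 1
    · congr 1
      omega
    · congr 1
      omega
  · congr 1
    omega

end Statement
end

section
/- Let M₁=(E,r₁) and M₂=(E,r₂) be matroids on a common finite ground set E. Then the joint Tutte polynomial specializes to the Tutte polynomials of M₁ and of M₂ as follows: (i) S_{M₁,M₂}(X, Y, Y) = (Y−1)^{r₁(E)} · T_{M₁}(X, Y) for all X, Y in a field; and (ii) for all X, Y in a field with X ≠ 1, T_{M₂}(X, Y) = (X−1)^{r₂(E)} · S_{M₁,M₂}(X, Y, X/(X−1)). -/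
section Statement

/-- Equations (3.2) and (3.3): the joint Tutte polynomial specializes to the
Tutte polynomials of `M₁` and of `M₂`. -/
theorem jointTutte_specializations (E : Type) [Fintype E] [DecidableEq E]
    (K : Type) [Field K] (M₁ M₂ : RankMatroid E) :
    (∀ x y : K,
      jointTutteFn M₁.r M₂.r x y y = (y - 1) ^ (M₁.r Finset.univ) * tutteFn M₁.r x y) ∧
    (∀ x y : K, x ≠ 1 →
      tutteFn M₂.r x y =
        (x - 1) ^ (M₂.r Finset.univ) * jointTutteFn M₁.r M₂.r x y (x / (x - 1))) := by
  constructor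
  · intro x y
    unfold jointTutteFn tutteFn
    rw [Finset.mul_sum]
    apply Finset.sum_congr rfl
    intro A _
    have h1 := M₁.rank_le_card A
    have h2 := M₂.rank_le_card A
    have h3 := M₁.rank_mono (Finset.subset_univ A)
    have key : (A.card - M₂.r A) + ((M₂.r A + M₁.r Finset.univ) - M₁.r A)
        = M₁.r Finset.univ + (A.card - M₁.r A) := by omega
    rw [mul_assoc, ← pow_add, key, pow_add]
    ring
  · intro x y hx
    have hx' : x - 1 ≠ 0 := sub_ne_zero.mpr hx
    have hz : x / (x - 1) - 1 = (x - 1)⁻¹ := by field_simp; ring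
    unfold jointTutteFn tutteFn
    rw [Finset.mul_sum]
    apply Finset.sum_congr rfl
    intro A _
    have h3 := M₁.rank_mono (Finset.subset_univ A)
    have h4 := M₂.rank_mono (Finset.subset_univ A)
    rw [hz, inv_pow]
    have key : M₂.r Finset.univ + (M₁.r Finset.univ - M₁.r A)
        = (M₂.r Finset.univ - M₂.r A) + ((M₂.r A + M₁.r Finset.univ) - M₁.r A) := by omega
    have hpow : (x - 1) ^ (M₂.r Finset.univ) * (x - 1) ^ (M₁.r Finset.univ - M₁.r A)
        = (x - 1) ^ (M₂.r Finset.univ - M₂.r A)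
          * (x - 1) ^ ((M₂.r A + M₁.r Finset.univ) - M₁.r A) := by
      rw [← pow_add, ← pow_add, key]
    field_simp
    rw [mul_assoc ((y - 1) ^ _), hpow]
    ring

end Statement
end
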